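/- arXiv:0909.3704 — 7 statements merged into one kernel-verified Lean document; each statement's English description precedes it below -/
import Mathlib

section
/- If p is a random variable on [0,1] whose distribution is stochastically smaller than U[0,1], then E[-log(1-p)] ≤ 1, where -log(1-p) may take the value +∞. -/
open MeasureTheory
open scoped ENNReal

/-- If `p` is a random variable with values in `[0,1]` whose distribution is
stochastically smaller than `U[0,1]`, then `E[-log(1-p)] ≤ 1`, where the
(nonnegative) random variable `-log(1-p)` is interpreted as `+∞` when `p = 1`. -/
theorem expectation_neg_log_one_sub_le_one_of_stochastically_smaller
    {Ω : Type*} [MeasurableSpace Ω]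
    (μ : Measure Ω) [IsProbabilityMeasure μ]
    (p : Ω → ℝ) (hmeas : Measurable p) (hrange : ∀ ω, p ω ∈ Set.Icc (0:ℝ) 1)
    (hstoch : ∀ x ∈ Set.Icc (0:ℝ) 1, ENNReal.ofReal x ≤ μ {ω | p ω ≤ x}) :
    ∫⁻ ω, (if p ω = 1 then (⊤ : ℝ≥0∞) else ENNReal.ofReal (-Real.log (1 - p ω))) ∂μ ≤ 1 := by
  -- The event `p = 1` has measure zero.
  have h1 : μ {ω | p ω = 1} = 0 := by
    by_contra h
    obtain ⟨ε, hε, hε1, hεlt⟩ : ∃ ε : ℝ, 0 < ε ∧ ε < 1 ∧ ENNReal.ofReal ε < μ {ω | p ω = 1} := by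
      rcases ENNReal.lt_iff_exists_real_btwn.mp
        (pos_iff_ne_zero.mpr h : 0 < μ {ω | p ω = 1}) with ⟨r, hr0, hr1, hr2⟩
      have hrpos : 0 < r := ENNReal.ofReal_pos.mp (lt_of_le_of_lt zero_le hr1)
      refine ⟨min r (1/2), by positivity, by
        calc min r (1/2) ≤ 1/2 := min_le_right _ _
        _ < 1 := by norm_num, ?_⟩
      calc ENNReal.ofReal (min r (1/2)) ≤ ENNReal.ofReal r :=
            ENNReal.ofReal_le_ofReal (min_le_left _ _)
        _ < μ {ω | p ω = 1} := hr2
    -- but μ {p = 1} ≤ μ {p > 1 - ε'} ≤ ε' for all ε'... take x = 1 - ε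
    have hx : (1 - ε) ∈ Set.Icc (0:ℝ) 1 := ⟨by linarith, by linarith⟩
    have hle := hstoch _ hx
    have hsub : {ω | p ω = 1} ⊆ {ω | p ω ≤ 1 - ε}ᶜ := by
      intro ω hω
      simp only [Set.mem_compl_iff, Set.mem_setOf_eq, not_le]
      rw [Set.mem_setOf_eq] at hω; linarith
    have hms : MeasurableSet {ω | p ω ≤ 1 - ε} := hmeas measurableSet_Iic
    have hcompl : μ {ω | p ω ≤ 1 - ε}ᶜ ≤ ENNReal.ofReal ε := by
      rw [measure_compl hms (measure_ne_top μ _), measure_univ]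
      calc 1 - μ {ω | p ω ≤ 1 - ε} ≤ 1 - ENNReal.ofReal (1 - ε) :=
            tsub_le_tsub_left hle 1
        _ = ENNReal.ofReal ε := by
            rw [← ENNReal.ofReal_one, ← ENNReal.ofReal_sub _ (by linarith)]
            norm_num
    exact absurd ((measure_mono hsub).trans hcompl) (not_le.mpr hεlt)
  -- Replace the integrand a.e. by `ofReal (-log (1 - p ω))`.
  have hae : (fun ω => if p ω = 1 then (⊤ : ℝ≥0∞) else ENNReal.ofReal (-Real.log (1 - p ω)))
      =ᵐ[μ] fun ω => ENNReal.ofReal (-Real.log (1 - p ω)) := by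
    filter_upwards [measure_eq_zero_iff_ae_notMem.mp h1] with ω hω
    exact if_neg hω
  rw [lintegral_congr_ae hae]
  -- Layer cake.
  have hf_mble : AEMeasurable (fun ω => -Real.log (1 - p ω)) μ :=
    ((Real.measurable_log.comp ((measurable_const.sub hmeas))).neg).aemeasurable
  have hf_nn : 0 ≤ᵐ[μ] fun ω => -Real.log (1 - p ω) := by
    refine Filter.Eventually.of_forall fun ω => ?_
    have h0 := (hrange ω).1
    have h2 := (hrange ω).2
    have : Real.log (1 - p ω) ≤ 0 := Real.log_nonpos (by linarith) (by linarith)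
    simp only [Pi.zero_apply]
    linarith
  rw [lintegral_eq_lintegral_meas_lt μ hf_nn hf_mble]
  -- Bound the tail measure by `exp (-t)`.
  have hbound : ∀ t ∈ Set.Ioi (0:ℝ),
      μ {a | t < -Real.log (1 - p a)} ≤ ENNReal.ofReal (Real.exp (-t)) := by
    intro t ht
    rw [Set.mem_Ioi] at ht
    have hexp1 : Real.exp (-t) < 1 := by
      rw [Real.exp_lt_one_iff]; linarith
    have hexp0 : 0 < Real.exp (-t) := Real.exp_pos _
    have hsub : {a | t < -Real.log (1 - p a)} ⊆ {a | p a ≤ 1 - Real.exp (-t)}ᶜ := by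
      intro a ha
      simp only [Set.mem_compl_iff, Set.mem_setOf_eq, not_le]
      rw [Set.mem_setOf_eq] at ha
      by_cases hpa : p a = 1
      · rw [hpa]; linarith
      · have hlt : p a < 1 := lt_of_le_of_ne (hrange a).2 hpa
        have hpos : 0 < 1 - p a := by linarith
        have : Real.log (1 - p a) < -t := by linarith
        have := (Real.log_lt_iff_lt_exp hpos).mp this
        linarith
    refine (measure_mono hsub).trans ?_
    have hms : MeasurableSet {a | p a ≤ 1 - Real.exp (-t)} := hmeas measurableSet_Iic
    rw [measure_compl hms (measure_ne_top μ _), measure_univ]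
    calc 1 - μ {a | p a ≤ 1 - Real.exp (-t)} ≤ 1 - ENNReal.ofReal (1 - Real.exp (-t)) :=
          tsub_le_tsub_left (hstoch _ ⟨by linarith, by linarith⟩) 1
      _ = ENNReal.ofReal (Real.exp (-t)) := by
          rw [← ENNReal.ofReal_one, ← ENNReal.ofReal_sub _ (by linarith)]
          norm_num
  calc ∫⁻ t in Set.Ioi (0:ℝ), μ {a | t < -Real.log (1 - p a)}
      ≤ ∫⁻ t in Set.Ioi (0:ℝ), ENNReal.ofReal (Real.exp (-t)) := by
        refine setLIntegral_mono' measurableSet_Ioi hbound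
    _ = ENNReal.ofReal (∫ t in Set.Ioi (0:ℝ), Real.exp (-t)) := by
        rw [← ofReal_integral_eq_lintegral_ofReal]
        · have hI := exp_neg_integrableOn_Ioi 0 (by norm_num : (0:ℝ) < 1)
          simp at hI
          exact hI
        · exact Filter.Eventually.of_forall fun t => (Real.exp_pos _).le
    _ = 1 := by rw [integral_exp_neg_Ioi_zero, ENNReal.ofReal_one]
end

section
/- Let p_1, ..., p_{m_0} be i.i.d. U[0,1] and p_{m_0+1}, ..., p_m independent random variables on [0,1] each stochastically smaller than U[0,1]. Then the estimator m̃_0' = -Σ_{i=1}^m log(1-p_i) satisfies m_0 ≤ E[m̃_0'] ≤ m. -/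
open scoped ENNReal
open MeasureTheory ProbabilityTheory Set Real

lemma set_iff_aux {t x : ℝ} (ht : 0 < t) (hx : x ∈ Set.Icc (0:ℝ) 1) :
    t < -Real.log (1 - x) ↔ x ∈ Set.Ioo (1 - Real.exp (-t)) 1 := by
  rcases eq_or_lt_of_le hx.2 with h1 | h1
  · subst h1
    simp only [sub_self, Real.log_zero, neg_zero, mem_Ioo, lt_self_iff_false, and_false]
    constructor <;> intro h <;> [linarith; exact h.elim]
  · have h0 : 0 < 1 - x := by linarith
    have h2 : Real.log (1-x) < -t ↔ 1 - x < Real.exp (-t) := Real.log_lt_iff_lt_exp h0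
    constructor
    · intro h
      have := h2.mp (by linarith)
      exact ⟨by linarith, h1⟩
    · rintro ⟨hxa, -⟩
      have := h2.mpr (by linarith)
      linarith

lemma exp_lintegral_one : ∫⁻ t in Set.Ioi (0:ℝ), ENNReal.ofReal (Real.exp (-t)) = 1 := by
  rw [← ofReal_integral_eq_lintegral_ofReal]
  · rw [integral_exp_neg_Ioi_zero]; simp
  · exact (by simpa using exp_neg_integrableOn_Ioi 0 (by norm_num : (0:ℝ) < 1) :
      IntegrableOn (fun t : ℝ => Real.exp (-t)) (Set.Ioi 0))
  · filter_upwards with t using (Real.exp_pos _).le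

lemma tail_layercake {Ω : Type*} [MeasurableSpace Ω] (ν : Measure Ω) [IsProbabilityMeasure ν]
    (q : Ω → ℝ) (hq : Measurable q) (hr : ∀ ω, q ω ∈ Set.Icc (0:ℝ) 1) :
    ∫⁻ ω, ENNReal.ofReal (-Real.log (1 - q ω)) ∂ν
      = ∫⁻ t in Set.Ioi (0:ℝ), ν {ω | q ω ∈ Set.Ioo (1 - Real.exp (-t)) 1} := by
  have hnn : 0 ≤ᵐ[ν] fun ω => -Real.log (1 - q ω) := by
    filter_upwards with ω
    simp only [Pi.zero_apply]
    have := hr ω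
    have : Real.log (1 - q ω) ≤ 0 := Real.log_nonpos (by linarith [this.2]) (by linarith [this.1])
    linarith
  have hmble : AEMeasurable (fun ω => -Real.log (1 - q ω)) ν :=
    ((Real.measurable_log.comp (measurable_const.sub hq)).neg).aemeasurable
  rw [lintegral_eq_lintegral_meas_lt ν hnn hmble]
  apply lintegral_congr_ae
  filter_upwards [ae_restrict_mem measurableSet_Ioi] with t ht
  congr 1
  ext ω
  simp only [Set.mem_setOf_eq]
  exact set_iff_aux ht (hr ω)

lemma L_le_one {Ω : Type*} [MeasurableSpace Ω] (ν : Measure Ω) [IsProbabilityMeasure ν]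
    (q : Ω → ℝ) (hq : Measurable q) (hr : ∀ ω, q ω ∈ Set.Icc (0:ℝ) 1)
    (hdom : ∀ x ∈ Set.Icc (0:ℝ) 1, ENNReal.ofReal x ≤ ν {ω | q ω ≤ x}) :
    ∫⁻ ω, ENNReal.ofReal (-Real.log (1 - q ω)) ∂ν ≤ 1 := by
  rw [tail_layercake ν q hq hr, ← exp_lintegral_one]
  apply lintegral_mono_ae
  filter_upwards [ae_restrict_mem measurableSet_Ioi] with t ht
  have ht' : (0:ℝ) < t := ht
  set a : ℝ := 1 - Real.exp (-t) with ha
  have ha01 : a ∈ Set.Icc (0:ℝ) 1 := by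
    constructor
    · have : Real.exp (-t) < 1 := Real.exp_lt_one_iff.mpr (by linarith)
      linarith
    · linarith [Real.exp_pos (-t)]
  have hsub : {ω | q ω ∈ Set.Ioo a 1} ⊆ {ω | q ω ≤ a}ᶜ := by
    intro ω hω
    simp only [Set.mem_compl_iff, Set.mem_setOf_eq, not_le]
    exact hω.1
  calc ν {ω | q ω ∈ Set.Ioo a 1} ≤ ν {ω | q ω ≤ a}ᶜ := measure_mono hsub
    _ = 1 - ν {ω | q ω ≤ a} := by
        rw [measure_compl (measurableSet_le hq measurable_const) (measure_ne_top ν _), measure_univ]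
    _ ≤ 1 - ENNReal.ofReal a := tsub_le_tsub_left (hdom a ha01) 1
    _ = ENNReal.ofReal (Real.exp (-t)) := by
        rw [← ENNReal.ofReal_one, ← ENNReal.ofReal_sub _ ha01.1]
        congr 1; simp [ha]

lemma L_eq_one {Ω : Type*} [MeasurableSpace Ω] (ν : Measure Ω) [IsProbabilityMeasure ν]
    (q : Ω → ℝ) (hq : Measurable q) (hr : ∀ ω, q ω ∈ Set.Icc (0:ℝ) 1)
    (hmap : Measure.map q ν = volume.restrict (Set.Icc (0:ℝ) 1)) :
    ∫⁻ ω, ENNReal.ofReal (-Real.log (1 - q ω)) ∂ν = 1 := by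
  rw [tail_layercake ν q hq hr, ← exp_lintegral_one]
  apply lintegral_congr_ae
  filter_upwards [ae_restrict_mem measurableSet_Ioi] with t ht
  have ht' : (0:ℝ) < t := ht
  set a : ℝ := 1 - Real.exp (-t) with ha
  have ha01 : a ∈ Set.Icc (0:ℝ) 1 := by
    constructor
    · have : Real.exp (-t) < 1 := Real.exp_lt_one_iff.mpr (by linarith)
      linarith
    · linarith [Real.exp_pos (-t)]
  have : ν {ω | q ω ∈ Set.Ioo a 1} = Measure.map q ν (Set.Ioo a 1) := by
    rw [Measure.map_apply hq measurableSet_Ioo]; rfl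
  rw [this, hmap, Measure.restrict_apply measurableSet_Ioo,
    Set.inter_eq_self_of_subset_left (Set.Ioo_subset_Icc_self.trans (Set.Icc_subset_Icc ha01.1 le_rfl)),
    Real.volume_Ioo]
  congr 1; simp [ha]

/-- Let `p 0, ..., p (m₀-1)` be i.i.d. `U[0,1]` (the nulls) and the remaining
`p m₀, ..., p (m-1)` independent with values in `[0,1]`, each stochastically
smaller than `U[0,1]`. Then the estimator `m̃₀' = -∑ᵢ log(1 - p i)` satisfies
`m₀ ≤ E[m̂₀'] ≤ m`. -/
theorem log_estimator_bounds {Ω : Type*} [MeasurableSpace Ω]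
    (μ : Measure Ω) [IsProbabilityMeasure μ] (m m₀ : ℕ) (hm : m₀ ≤ m)
    (p : Fin m → Ω → ℝ) (hmeas : ∀ i, Measurable (p i))
    (hindep : iIndepFun p μ)
    (hrange : ∀ i ω, p i ω ∈ Set.Icc (0:ℝ) 1)
    (hnull : ∀ i : Fin m, (i : ℕ) < m₀ →
      Measure.map (p i) μ = volume.restrict (Set.Icc (0:ℝ) 1))
    (halt : ∀ i : Fin m, m₀ ≤ (i : ℕ) → ∀ x ∈ Set.Icc (0:ℝ) 1,
      ENNReal.ofReal x ≤ μ {ω | p i ω ≤ x}) :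
    (m₀ : ℝ) ≤ ∫ ω, ∑ j, -Real.log (1 - p j ω) ∂μ ∧ ∫ ω, ∑ j, -Real.log (1 - p j ω) ∂μ ≤ (m : ℝ) := by
  set L : Fin m → ℝ≥0∞ := fun j => ∫⁻ ω, ENNReal.ofReal (-Real.log (1 - p j ω)) ∂μ with hL
  have hterm_nonneg : ∀ j ω, 0 ≤ -Real.log (1 - p j ω) := by
    intro j ω
    have h := hrange j ω
    have : Real.log (1 - p j ω) ≤ 0 := Real.log_nonpos (by linarith [h.2]) (by linarith [h.1])
    linarith
  have hL1 : ∀ j, L j ≤ 1 := by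
    intro j
    rcases lt_or_ge (j : ℕ) m₀ with h | h
    · exact (L_eq_one μ (p j) (hmeas j) (hrange j) (hnull j h)).le
    · exact L_le_one μ (p j) (hmeas j) (hrange j) (halt j h)
  have hLnull : ∀ j : Fin m, (j : ℕ) < m₀ → L j = 1 := fun j h =>
    L_eq_one μ (p j) (hmeas j) (hrange j) (hnull j h)
  have hfmeas : ∀ j : Fin m, Measurable fun ω => -Real.log (1 - p j ω) := fun j =>
    (Real.measurable_log.comp (measurable_const.sub (hmeas j))).neg
  have hsum : ∫⁻ ω, ENNReal.ofReal (∑ j, -Real.log (1 - p j ω)) ∂μ = ∑ j, L j := by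
    rw [← lintegral_finset_sum _ (fun j _ => (hfmeas j).ennreal_ofReal)]
    apply lintegral_congr
    intro ω
    exact ENNReal.ofReal_sum_of_nonneg (fun j _ => hterm_nonneg j ω)
  have hLt : ∀ j, L j ≠ ⊤ := fun j => ne_top_of_le_ne_top (by simp) (hL1 j)
  have hInt : ∫ ω, ∑ j, -Real.log (1 - p j ω) ∂μ = ∑ j, (L j).toReal := by
    rw [integral_eq_lintegral_of_nonneg_ae
      (by filter_upwards with ω using Finset.sum_nonneg fun j _ => hterm_nonneg j ω)
      ((Finset.measurable_sum _ fun j _ => hfmeas j).aestronglyMeasurable), hsum]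
    exact ENNReal.toReal_sum (fun j _ => hLt j)
  rw [hInt]
  constructor
  · have key : ∑ j ∈ Finset.univ.map (Fin.castLEEmb hm), (L j).toReal = (m₀ : ℝ) := by
      rw [Finset.sum_map]
      simp only [Fin.castLEEmb_apply]
      have h1 : ∀ k : Fin m₀, (L (Fin.castLE hm k)).toReal = 1 := by
        intro k
        rw [hLnull _ k.2]; simp
      simp [h1]
    calc (m₀ : ℝ) = ∑ j ∈ Finset.univ.map (Fin.castLEEmb hm), (L j).toReal := key.symm
      _ ≤ ∑ j, (L j).toReal :=
          Finset.sum_le_sum_of_subset_of_nonneg (Finset.subset_univ _)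
            (fun j _ _ => ENNReal.toReal_nonneg)
  · calc ∑ j, (L j).toReal ≤ ∑ _j : Fin m, (1:ℝ) :=
          Finset.sum_le_sum fun j _ => by
            simpa using ENNReal.toReal_mono (by simp) (hL1 j)
      _ = (m : ℝ) := by simp
end

section
/- Let p_2, ..., p_m be independent random variables on [0,1] where p_2,...,p_{m_0} are i.i.d. U[0,1]. Define m̃_0^{(1)} = 2 - Σ_{i=2}^m log(1-p_i). Then E[1/m̃_0^{(1)}] ≤ 1/m_0, provided the alternative p-values p_{m_0+1},...,p_m are in [0,1] almost surely. -/
set_option maxHeartbeats 1000000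

open MeasureTheory ProbabilityTheory Real Set

lemma auxA' {c : ℝ} (hc : 0 < c) :
    ENNReal.ofReal (1 / c)
      = ∫⁻ t in Ioi (0:ℝ), ENNReal.ofReal (Real.exp (-(c * t))) := by
  have hint : IntegrableOn (fun t : ℝ => Real.exp (-(c * t))) (Ioi 0) := by
    simpa [neg_mul] using exp_neg_integrableOn_Ioi 0 hc
  have hval : ∫ t in Ioi (0:ℝ), Real.exp (-(c * t)) = 1 / c := by
    have hderiv : ∀ x ∈ Ici (0:ℝ),
        HasDerivAt (fun t : ℝ => -(Real.exp (-(c * t)) / c)) (Real.exp (-(c * x))) x := by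
      intro x _
      have h1 : HasDerivAt (fun t : ℝ => -(c * t)) (-c) x := by
        have h := ((hasDerivAt_id x).const_mul c).neg
        exact h.congr_deriv (by ring)
      have h3 := (h1.exp.div_const c).neg
      exact h3.congr_deriv (by field_simp)
    have htend : Filter.Tendsto (fun t : ℝ => -(Real.exp (-(c * t)) / c))
        Filter.atTop (nhds 0) := by
      have h1 : Filter.Tendsto (fun t : ℝ => c * t) Filter.atTop Filter.atTop :=
        Filter.Tendsto.const_mul_atTop hc Filter.tendsto_id
      have h2 : Filter.Tendsto (fun t : ℝ => Real.exp (-(c * t))) Filter.atTop (nhds 0) :=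
        Real.tendsto_exp_neg_atTop_nhds_zero.comp h1
      simpa using (h2.div_const c).neg
    rw [integral_Ioi_of_hasDerivAt_of_tendsto' hderiv hint htend]
    simp [neg_mul, mul_comm]
  rw [← hval, ofReal_integral_eq_lintegral_ofReal hint
    (Filter.Eventually.of_forall fun t => (Real.exp_pos _).le)]

lemma auxB {t : ℝ} (ht : 0 ≤ t) :
    ∫ x in Icc (0:ℝ) 1, Real.exp (t * Real.log (1 - x)) = 1 / (t + 1) := by
  have hae : ∀ᵐ x : ℝ, x ∈ Icc (0:ℝ) 1 →
      Real.exp (t * Real.log (1 - x)) = (1 - x) ^ t := by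
    have h1 : ∀ᵐ x : ℝ, x ≠ 1 := by
      have h0 : volume ({(1:ℝ)} : Set ℝ) = 0 := Real.volume_singleton
      rw [← MeasureTheory.compl_mem_ae_iff] at h0
      exact h0
    filter_upwards [h1] with x hx hmem
    have hlt : x < 1 := lt_of_le_of_ne hmem.2 hx
    rw [Real.rpow_def_of_pos (by linarith), mul_comm]
  have h2 : ∫ x in Icc (0:ℝ) 1, Real.exp (t * Real.log (1 - x))
      = ∫ x in Icc (0:ℝ) 1, (1 - x) ^ t :=
    setIntegral_congr_ae measurableSet_Icc hae
  rw [h2, MeasureTheory.integral_Icc_eq_integral_Ioc,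
    ← intervalIntegral.integral_of_le (by norm_num : (0:ℝ) ≤ 1)]
  have h3 := intervalIntegral.integral_comp_sub_left (a := (0:ℝ)) (b := 1)
    (fun x : ℝ => x ^ t) 1
  simp only [sub_zero, sub_self] at h3
  rw [h3, integral_rpow (Or.inl (by linarith))]
  rw [Real.one_rpow, Real.zero_rpow (by linarith)]
  ring

lemma auxC {a : ℝ} (ha : a < -1) :
    (∫ x in Ioi (0:ℝ), (1 + x) ^ a) = -1 / (a + 1) ∧
      IntegrableOn (fun x : ℝ => (1 + x) ^ a) (Ioi 0) := by
  have hmp : MeasurePreserving (fun x : ℝ => x + 1) volume volume :=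
    measurePreserving_add_right volume 1
  have hemb : MeasurableEmbedding (fun x : ℝ => x + 1) :=
    (MeasurableEquiv.addRight (1:ℝ)).measurableEmbedding
  have hpre : (fun x : ℝ => x + 1) ⁻¹' Ioi 1 = Ioi 0 := by
    ext x; simp [Set.mem_Ioi]
  constructor
  · have := hmp.setIntegral_preimage_emb hemb (fun y : ℝ => y ^ a) (Ioi 1)
    rw [hpre] at this
    have h2 : (∫ x in Ioi (0:ℝ), (1 + x) ^ a) = ∫ x in Ioi (0:ℝ), (x + 1) ^ a := by
      congr 1; ext x; rw [add_comm]
    rw [h2, this, integral_Ioi_rpow_of_lt ha one_pos, Real.one_rpow]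
  · have h := integrableOn_Ioi_rpow_of_lt ha one_pos
    have := (hmp.integrableOn_comp_preimage hemb (f := fun y : ℝ => y ^ a) (s := Ioi 1)).2 h
    rw [hpre] at this
    have h2 : (fun x : ℝ => (1 + x) ^ a) = ((fun y : ℝ => y ^ a) ∘ fun x => x + 1) := by
      ext x; simp [add_comm]
    rw [h2]; exact this

lemma auxCard {N k : ℕ} (hk : k ≤ N) :
    (Finset.univ.filter (fun j : Fin N => (j:ℕ) < k)).card = k := by
  have e : {j : Fin N // (j:ℕ) < k} ≃ Fin k :=
    { toFun := fun s => ⟨(s.1 : ℕ), s.2⟩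
      invFun := fun j => ⟨⟨(j:ℕ), lt_of_lt_of_le j.2 hk⟩, j.2⟩
      left_inv := fun s => by ext; rfl
      right_inv := fun j => by ext; rfl }
  rw [← Fintype.card_subtype, Fintype.card_congr e, Fintype.card_fin]

/-- Let `p₂, ..., p_m` be independent `[0,1]`-valued random variables (here
indexed by `Fin (m-1)`, index `j` standing for `p_{j+2}`), where the nulls
`p₂, ..., p_{m₀}` are i.i.d. `U[0,1]`. For the estimator
`m̃₀⁽¹⁾ = 2 - ∑ᵢ₌₂^m log(1 - pᵢ)` we have `E[1/m̃₀⁽¹⁾] ≤ 1/m₀`. -/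
theorem expectation_inv_log_estimator_drop_one {Ω : Type*} [MeasurableSpace Ω]
    (μ : Measure Ω) [IsProbabilityMeasure μ] (m m₀ : ℕ)
    (hm₀ : 1 ≤ m₀) (hm : m₀ ≤ m)
    (p : Fin (m - 1) → Ω → ℝ) (hmeas : ∀ j, Measurable (p j))
    (hindep : iIndepFun p μ)
    (hrange : ∀ j ω, p j ω ∈ Set.Icc (0:ℝ) 1)
    (hnull : ∀ j : Fin (m - 1), (j : ℕ) + 2 ≤ m₀ →
      Measure.map (p j) μ = volume.restrict (Set.Icc (0:ℝ) 1)) :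
    ∫ ω, 1 / (2 - ∑ j, Real.log (1 - p j ω)) ∂μ ≤ 1 / (m₀ : ℝ) := by
  classical
  set X : Fin (m - 1) → Ω → ℝ := fun j ω => Real.log (1 - p j ω) with hX
  have hXmeas : ∀ j, Measurable (X j) := fun j => (measurable_const.sub (hmeas j)).log
  have hXindep : iIndepFun X μ :=
    hindep.comp (fun _ x => Real.log (1 - x))
      (fun _ => (measurable_const.sub measurable_id).log)
  have hXnp : ∀ j ω, X j ω ≤ 0 := fun j ω =>
    Real.log_nonpos (by linarith [(hrange j ω).2]) (by linarith [(hrange j ω).1])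
  set S : Ω → ℝ := fun ω => ∑ j, X j ω with hSdef
  have hSmeas : Measurable S := Finset.measurable_sum _ (fun j _ => hXmeas j)
  have hSnp : ∀ ω, S ω ≤ 0 := fun ω => Finset.sum_nonpos (fun j _ => hXnp j ω)
  have hcpos : ∀ ω, 0 < 2 - S ω := fun ω => by linarith [hSnp ω]
  have hgoal_eq : ∫ ω, 1 / (2 - ∑ j, Real.log (1 - p j ω)) ∂μ
      = (∫⁻ ω, ENNReal.ofReal (1 / (2 - S ω)) ∂μ).toReal := by
    have hre : ∫ ω, 1 / (2 - ∑ j, Real.log (1 - p j ω)) ∂μ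
        = ∫ ω, 1 / (2 - S ω) ∂μ := rfl
    rw [hre, integral_eq_lintegral_of_nonneg_ae
      (Filter.Eventually.of_forall fun ω => (div_pos one_pos (hcpos ω)).le)
      (measurable_const.div (measurable_const.sub hSmeas)).aestronglyMeasurable]
  rw [hgoal_eq]
  refine ENNReal.toReal_le_of_le_ofReal (by positivity) ?_
  -- Laplace transform representation
  have key : ∀ ω, ENNReal.ofReal (1 / (2 - S ω))
      = ∫⁻ t in Ioi (0:ℝ), ENNReal.ofReal (Real.exp (-((2 - S ω) * t))) :=
    fun ω => auxA' (hcpos ω)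
  simp_rw [key]
  rw [lintegral_lintegral_swap]
  swap
  · exact ((((measurable_const.sub (hSmeas.comp measurable_fst)).mul
      measurable_snd).neg).exp.ennreal_ofReal).aemeasurable
  -- inner bound
  have inner : ∀ t ∈ Ioi (0:ℝ),
      (∫⁻ ω, ENNReal.ofReal (Real.exp (-((2 - S ω) * t))) ∂μ)
        ≤ ENNReal.ofReal ((1 + t) ^ (-((m₀:ℝ) + 1))) := by
    intro t ht
    have ht' : 0 < t := ht
    have hrw : ∀ ω, Real.exp (-((2 - S ω) * t))
        = Real.exp (t * S ω) * Real.exp (-(2 * t)) := by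
      intro ω; rw [← Real.exp_add]; ring_nf
    simp_rw [hrw, ENNReal.ofReal_mul (Real.exp_pos _).le]
    rw [lintegral_mul_const _ ((hSmeas.const_mul t).exp.ennreal_ofReal)]
    have hintS : Integrable (fun ω => Real.exp (t * S ω)) μ := by
      refine Integrable.mono' (integrable_const 1)
        ((hSmeas.const_mul t).exp).aestronglyMeasurable
        (Filter.Eventually.of_forall fun ω => ?_)
      rw [Real.norm_eq_abs, Real.abs_exp, Real.exp_le_one_iff]
      exact mul_nonpos_of_nonneg_of_nonpos ht'.le (hSnp ω)
    rw [← ofReal_integral_eq_lintegral_ofReal hintS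
      (Filter.Eventually.of_forall fun ω => (Real.exp_pos _).le)]
    have hmgf : ∫ ω, Real.exp (t * S ω) ∂μ = ∏ j, mgf (X j) μ t := by
      have h1 : (fun ω => Real.exp (t * S ω))
          = fun ω => Real.exp (t * (∑ j, X j) ω) := by
        funext ω; simp [hSdef, Finset.sum_apply]
      calc ∫ ω, Real.exp (t * S ω) ∂μ
          = mgf (∑ j, X j) μ t := by rw [mgf]; exact congrArg (fun f => ∫ ω, f ω ∂μ) h1
        _ = ∏ j, mgf (X j) μ t := hXindep.mgf_sum hXmeas Finset.univ
    rw [hmgf]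
    -- bound the product of mgfs
    have hnullmgf : ∀ j : Fin (m-1), (j:ℕ) + 2 ≤ m₀ → mgf (X j) μ t = 1 / (t + 1) := by
      intro j hj
      have hg : Measurable fun x : ℝ => Real.exp (t * Real.log (1 - x)) :=
        ((measurable_const.sub measurable_id).log.const_mul t).exp
      rw [mgf]
      have : ∫ ω, Real.exp (t * X j ω) ∂μ
          = ∫ x, Real.exp (t * Real.log (1 - x)) ∂(Measure.map (p j) μ) := by
        rw [integral_map (hmeas j).aemeasurable hg.aestronglyMeasurable]
      rw [this, hnull j hj, auxB ht'.le]
    have hmgf_le_one : ∀ j : Fin (m-1), mgf (X j) μ t ≤ 1 := by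
      intro j
      have : mgf (X j) μ t ≤ ∫ _ω, (1:ℝ) ∂μ := by
        refine integral_mono_of_nonneg
          (Filter.Eventually.of_forall fun ω => (Real.exp_pos _).le)
          (integrable_const 1)
          (Filter.Eventually.of_forall fun ω => ?_)
        rw [← Real.exp_zero]
        exact Real.exp_le_exp.2 (mul_nonpos_of_nonneg_of_nonpos ht'.le (hXnp j ω))
      rwa [integral_const, probReal_univ, one_smul] at this
    have hprod : ∏ j, mgf (X j) μ t ≤ (1 / (t + 1)) ^ (m₀ - 1) := by
      rw [← Finset.prod_filter_mul_prod_filter_not Finset.univ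
        (fun j : Fin (m-1) => (j:ℕ) + 2 ≤ m₀)]
      have h1 : ∏ j ∈ Finset.univ.filter (fun j : Fin (m-1) => (j:ℕ) + 2 ≤ m₀),
          mgf (X j) μ t = (1 / (t + 1)) ^ (m₀ - 1) := by
        rw [Finset.prod_congr rfl (fun j hj => hnullmgf j (Finset.mem_filter.1 hj).2),
          Finset.prod_const]
        congr 1
        have : (Finset.univ.filter (fun j : Fin (m-1) => (j:ℕ) + 2 ≤ m₀))
            = (Finset.univ.filter (fun j : Fin (m-1) => (j:ℕ) < m₀ - 1)) := by
          apply Finset.filter_congr; intro j _; omega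
        rw [this, auxCard (by omega)]
      rw [h1]
      have h2 : ∏ j ∈ Finset.univ.filter
          (fun j : Fin (m-1) => ¬((j:ℕ) + 2 ≤ m₀)), mgf (X j) μ t ≤ 1 :=
        Finset.prod_le_one (fun j _ => mgf_nonneg) (fun j _ => hmgf_le_one j)
      have h3 : (0:ℝ) ≤ (1 / (t + 1)) ^ (m₀ - 1) := by positivity
      calc (1 / (t + 1)) ^ (m₀ - 1) * ∏ j ∈ Finset.univ.filter
            (fun j : Fin (m-1) => ¬((j:ℕ) + 2 ≤ m₀)), mgf (X j) μ t
          ≤ (1 / (t + 1)) ^ (m₀ - 1) * 1 := by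
            refine mul_le_mul_of_nonneg_left h2 h3
        _ = (1 / (t + 1)) ^ (m₀ - 1) := mul_one _
    -- combine, use exp(-2t) ≤ (1+t)^{-2}
    rw [← ENNReal.ofReal_mul (Finset.prod_nonneg fun j _ => mgf_nonneg)]
    refine ENNReal.ofReal_le_ofReal ?_
    have hu : (0:ℝ) < 1 + t := by linarith
    have hexp : Real.exp (-(2 * t)) ≤ ((1 + t) ^ 2)⁻¹ := by
      rw [Real.exp_neg]
      refine inv_anti₀ (by positivity) ?_
      have h1 : (1 + t) ≤ Real.exp t := by
        have := Real.add_one_le_exp t; linarith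
      have h2 : (1 + t) ^ 2 ≤ (Real.exp t) ^ 2 :=
        pow_le_pow_left₀ hu.le h1 2
      have h3 : (Real.exp t) ^ 2 = Real.exp (2 * t) := by
        rw [← Real.exp_nat_mul]; norm_num
      linarith
    have hbound : (∏ j, mgf (X j) μ t) * Real.exp (-(2 * t))
        ≤ (1 / (t + 1)) ^ (m₀ - 1) * ((1 + t) ^ 2)⁻¹ := by
      refine mul_le_mul hprod hexp (Real.exp_pos _).le (by positivity)
    refine hbound.trans (le_of_eq ?_)
    rw [Real.rpow_neg hu.le]
    have : ((m₀:ℝ) + 1) = ((m₀ + 1 : ℕ) : ℝ) := by push_cast; ring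
    rw [this, Real.rpow_natCast]
    rw [one_div, inv_pow, add_comm t 1, ← mul_inv, ← pow_add]
    congr 2
    omega
  -- conclude
  calc ∫⁻ t in Ioi (0:ℝ), ∫⁻ ω, ENNReal.ofReal (Real.exp (-((2 - S ω) * t))) ∂μ
      ≤ ∫⁻ t in Ioi (0:ℝ), ENNReal.ofReal ((1 + t) ^ (-((m₀:ℝ) + 1))) :=
        lintegral_mono_ae ((ae_restrict_iff' measurableSet_Ioi).2
          (Filter.Eventually.of_forall inner))
    _ = ENNReal.ofReal (1 / (m₀:ℝ)) := by
        have ha : (-((m₀:ℝ) + 1)) < -1 := by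
          have : (1:ℝ) ≤ (m₀:ℝ) := by exact_mod_cast hm₀
          linarith
        obtain ⟨hval, hint⟩ := auxC ha
        rw [← ofReal_integral_eq_lintegral_ofReal hint
          ((ae_restrict_iff' measurableSet_Ioi).2 (Filter.Eventually.of_forall
            fun x hx => Real.rpow_nonneg (by simp only [Set.mem_Ioi] at hx; linarith) _))]
        rw [hval]
        congr 1
        have : (m₀:ℝ) ≠ 0 := by positivity
        field_simp
        rw [show -((m₀:ℝ) + 1) + 1 = -(m₀:ℝ) by ring, div_neg, neg_neg, div_self this]
end

section
/- Let m̂_0: [0,1]^m → ℝ be a monotonic estimator for m_0 (non-decreasing in each p-value, and removing a p-value does not increase the estimate). Consider the modified step-up BH procedure with thresholds γ_i = iq/m̂_0(p⃗), applied to m independent p-values of which the first m_0 are i.i.d. U[0,1]. Let m̂_0^{(1)}(p⃗) = m̂_0(p_2,...,p_m). Then FDR = E[V/max(R,1)] ≤ m_0 · q · E[1/m̂_0^{(1)}]. -/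
open MeasureTheory ProbabilityTheory Finset
open scoped Classical ENNReal

/-- The number of rejections of the step-up procedure with thresholds `γ`:
`R = max {k ≤ m : p_(k) ≤ γ k}` (with `R = 0` if no such `k ≥ 1` exists),
using the standard equivalence `p_(k) ≤ t ↔ #{i : p i ≤ t} ≥ k`. -/
noncomputable def stepUpRejections (m : ℕ) (γ : ℕ → ℝ) (x : Fin m → ℝ) : ℕ :=
  ((Finset.range (m + 1)).filter
    (fun k => k ≤ (Finset.univ.filter (fun i : Fin m => x i ≤ γ k)).card)).sup id



lemma claimZ : ∀ (n : ℕ) (κ : Fin n → Measure ℝ), (∀ k, IsProbabilityMeasure (κ k)) →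
    ∀ (d : ℕ → ℝ), (∀ k (t : ℝ), κ k {t} ≠ 0 → t ∈ Set.range d) →
    (∀ a b : ℝ, a < b → ∃ j, a < d j ∧ d j < b) →
    ∀ S : Set (Fin n → ℝ), MeasurableSet S →
    (∀ c : Fin n → ℕ, ¬((∃ z ∈ S, ∀ k, d (c k) ≤ z k) ∧ (∃ z ∈ S, ∀ k, z k ≤ d (c k)))) →
    Measure.pi κ S = 0 := by
  intro n
  induction n with
  | zero =>
    intro κ hκ d hat hd S hS hsep
    have hSempty : S = ∅ := by
      by_contra h
      obtain ⟨z, hz⟩ := Set.nonempty_iff_ne_empty.2 h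
      exact hsep (fun k => 0) ⟨⟨z, hz, fun k => k.elim0⟩, ⟨z, hz, fun k => k.elim0⟩⟩
    simp [hSempty]
  | succ n IH =>
    intro κ hκ d hat hd S hS hsep
    haveI : ∀ k, IsProbabilityMeasure (κ k) := hκ
    haveI : ∀ k, SigmaFinite (κ k) := fun k => inferInstance
    set e := MeasurableEquiv.piFinSuccAbove (fun _ : Fin (n+1) => ℝ) 0 with he
    have MP := measurePreserving_piFinSuccAbove κ 0
    set ρ' : Measure (Fin n → ℝ) := Measure.pi (fun k => κ ((0:Fin (n+1)).succAbove k)) with hρ'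
    set A : Set (ℝ × (Fin n → ℝ)) := e.symm ⁻¹' S with hA
    have hAmeas : MeasurableSet A := e.symm.measurable hS
    have hES : Measure.pi κ S = ((κ 0).prod ρ') A := by
      rw [← MP.map_eq, MeasurableEquiv.map_apply]
      congr 1
      ext z
      simp only [hA, Set.mem_preimage]
      rw [show (e z : ℝ × (Fin n → ℝ)) = e z from rfl]
      rw [MeasurableEquiv.symm_apply_apply]
    have hsec_eq : ∀ t : ℝ, Prod.mk t ⁻¹' A = {y : Fin n → ℝ | Fin.cons t y ∈ S} := by
      intro t
      ext y
      simp only [hA, Set.mem_preimage, Set.mem_setOf_eq]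
      have : e.symm (t, y) = Fin.cons t y := by
        simp only [he, MeasurableEquiv.piFinSuccAbove, MeasurableEquiv.symm_mk,
          MeasurableEquiv.coe_mk, Equiv.symm_symm, Fin.insertNthEquiv_zero]
        rfl
      rw [this]
    set Sec : ℝ → Set (Fin n → ℝ) := fun t => {y : Fin n → ℝ | Fin.cons t y ∈ S} with hSec
    have hSecMeas : ∀ t, MeasurableSet (Sec t) := by
      intro t
      have hcons : Measurable (fun y : Fin n → ℝ => Fin.cons t y :
          (Fin n → ℝ) → (Fin (n+1) → ℝ)) := by
        apply measurable_pi_lambda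
        intro j
        refine Fin.cases ?_ ?_ j
        · simpa using measurable_const
        · intro k; simpa using measurable_pi_apply k
      exact hcons hS
    -- sections at grid points vanish
    have claimA : ∀ t ∈ Set.range d, ρ' (Sec t) = 0 := by
      intro t ht
      obtain ⟨j, hj⟩ := ht
      refine IH _ (fun k => hκ _) d (fun k s hs => hat _ s hs) hd (Sec t) (hSecMeas t) ?_
      rintro c' ⟨⟨z1, hz1, h1⟩, ⟨z2, hz2, h2⟩⟩
      refine hsep (Fin.cons j c') ⟨⟨Fin.cons t z1, hz1, ?_⟩, ⟨Fin.cons t z2, hz2, ?_⟩⟩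
      · intro k
        refine Fin.cases ?_ ?_ k
        · simp [hj]
        · intro k'; simpa using h1 k'
      · intro k
        refine Fin.cases ?_ ?_ k
        · simp [hj]
        · intro k'; simpa using h2 k'
    -- the bad set of non-grid points with nonvanishing sections
    set T : Set ℝ := {t : ℝ | t ∉ Set.range d ∧ ρ' (Sec t) ≠ 0} with hT
    have hchoice : ∀ t : T, ∃ c' : Fin n → ℕ,
        (∃ z ∈ Sec (t:ℝ), ∀ k, d (c' k) ≤ z k) ∧ (∃ z ∈ Sec (t:ℝ), ∀ k, z k ≤ d (c' k)) := by
      rintro ⟨t, htr, hne⟩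
      by_contra hcon
      exact hne (IH _ (fun k => hκ _) d (fun k s hs => hat _ s hs) hd (Sec t) (hSecMeas t)
        (fun c' hb => hcon ⟨c', hb⟩))
    choose g hg1 hg2 using hchoice
    have hginj : Function.Injective g := by
      intro t1 t2 hgeq
      by_contra hne
      have hlt : (t1:ℝ) < t2 ∨ (t2:ℝ) < t1 := by
        rcases lt_trichotomy (t1:ℝ) (t2:ℝ) with h | h | h
        · exact Or.inl h
        · exact absurd (Subtype.ext h) hne
        · exact Or.inr h
      -- symmetric situation; handle via a general sub-argument
      have key : ∀ a b : T, (a:ℝ) < b → g a = g b → False := by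
        intro a b hab hg
        obtain ⟨j, hj1, hj2⟩ := hd _ _ hab
        obtain ⟨z2, hz2, hz2le⟩ := hg2 a
        obtain ⟨z1, hz1, hz1ge⟩ := hg1 b
        refine hsep (Fin.cons j (g a)) ⟨⟨Fin.cons (b:ℝ) z1, hz1, ?_⟩, ⟨Fin.cons (a:ℝ) z2, hz2, ?_⟩⟩
        · intro k
          refine Fin.cases ?_ ?_ k
          · simpa using le_of_lt hj2
          · intro k'
            have := hz1ge k'
            rw [← hg] at this
            simpa using this
        · intro k
          refine Fin.cases ?_ ?_ k
          · simpa using le_of_lt hj1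
          · intro k'; simpa using hz2le k'
      rcases hlt with h | h
      · exact key _ _ h hgeq
      · exact key _ _ h hgeq.symm
    have hTcount : T.Countable := by
      have : Countable T := Function.Injective.countable hginj
      exact Set.countable_coe_iff.mp this
    have hTnull : κ 0 T = 0 := by
      have : T = ⋃ t ∈ T, {t} := by simp
      rw [this, measure_biUnion_null_iff hTcount]
      intro t ht
      by_contra h
      exact ht.1 (hat 0 t h)
    rw [hES, Measure.prod_apply hAmeas]
    have hae : ∀ᵐ t ∂(κ 0), ρ' (Prod.mk t ⁻¹' A) = 0 := by
      have := measure_eq_zero_iff_ae_notMem.mp hTnull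
      filter_upwards [this] with t ht
      rw [hsec_eq t]
      by_cases hr : t ∈ Set.range d
      · exact claimA t hr
      · by_contra h
        exact ht ⟨hr, h⟩
    rw [lintegral_congr_ae hae, lintegral_zero]


noncomputable def lowEnv (n : ℕ) (φ : (Fin n → ℝ) → ℝ) (d : ℕ → ℝ) (z : Fin n → ℝ) : ℝ≥0∞ :=
  ⨆ c : Fin n → ℕ, if (∀ k, d (c k) ≤ z k) then ENNReal.ofReal (φ (fun k => d (c k))) else 0

noncomputable def upEnv (n : ℕ) (φ : (Fin n → ℝ) → ℝ) (d : ℕ → ℝ) (z : Fin n → ℝ) : ℝ≥0∞ :=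
  ⨅ c : Fin n → ℕ, if (∀ k, z k ≤ d (c k)) then ENNReal.ofReal (φ (fun k => d (c k))) else ⊤

lemma measurable_cond_ge (n : ℕ) (d : ℕ → ℝ) (c : Fin n → ℕ) :
    MeasurableSet {z : Fin n → ℝ | ∀ k, d (c k) ≤ z k} := by
  have : {z : Fin n → ℝ | ∀ k, d (c k) ≤ z k} = ⋂ k, {z | d (c k) ≤ z k} := by
    ext z; simp
  rw [this]
  exact MeasurableSet.iInter fun k => measurableSet_le measurable_const (measurable_pi_apply k)

lemma measurable_cond_le (n : ℕ) (d : ℕ → ℝ) (c : Fin n → ℕ) :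
    MeasurableSet {z : Fin n → ℝ | ∀ k, z k ≤ d (c k)} := by
  have : {z : Fin n → ℝ | ∀ k, z k ≤ d (c k)} = ⋂ k, {z | z k ≤ d (c k)} := by
    ext z; simp
  rw [this]
  exact MeasurableSet.iInter fun k => measurableSet_le (measurable_pi_apply k) measurable_const

lemma measurable_lowEnv (n φ d) : Measurable (lowEnv n φ d) := by
  apply Measurable.iSup
  intro c
  exact Measurable.ite (measurable_cond_ge n d c) measurable_const measurable_const

lemma measurable_upEnv (n φ d) : Measurable (upEnv n φ d) := by
  apply Measurable.iInf
  intro c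
  exact Measurable.ite (measurable_cond_le n d c) measurable_const measurable_const

lemma lowEnv_le (n φ d) (hmono : ∀ x y : Fin n → ℝ, (∀ i, x i ≤ y i) → φ x ≤ φ y) (z) :
    lowEnv n φ d z ≤ ENNReal.ofReal (φ z) := by
  apply iSup_le
  intro c
  split_ifs with h
  · exact ENNReal.ofReal_le_ofReal (hmono _ _ h)
  · exact zero_le

lemma le_upEnv (n φ d) (hmono : ∀ x y : Fin n → ℝ, (∀ i, x i ≤ y i) → φ x ≤ φ y) (z) :
    ENNReal.ofReal (φ z) ≤ upEnv n φ d z := by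
  apply le_iInf
  intro c
  split_ifs with h
  · exact ENNReal.ofReal_le_ofReal (hmono _ _ h)
  · exact le_top

lemma lowEnv_mono (n φ d) {z z' : Fin n → ℝ} (h : ∀ k, z k ≤ z' k) :
    lowEnv n φ d z ≤ lowEnv n φ d z' := by
  apply iSup_mono
  intro c
  split_ifs with h1 h2
  · exact le_refl _
  · exact absurd (fun k => le_trans (h1 k) (h k)) h2
  · exact zero_le
  · exact le_refl _

lemma lowEnv_pos (n φ d) (hd : ∀ a b : ℝ, a < b → ∃ j, a < d j ∧ d j < b)
    (hpos : ∀ x, 0 < φ x) (z) : 0 < lowEnv n φ d z := by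
  obtain ⟨M, hM⟩ := Finset.exists_le (Finset.univ.image (fun k : Fin n => -(z k)))
  obtain ⟨j, hj1, hj2⟩ := hd (-M - 1) (-M) (by linarith)
  have hjz : ∀ k, d j ≤ z k := by
    intro k
    have : -(z k) ≤ M := hM _ (Finset.mem_image_of_mem _ (Finset.mem_univ k))
    linarith
  calc (0 : ℝ≥0∞) < ENNReal.ofReal (φ (fun _ => d j)) := ENNReal.ofReal_pos.2 (hpos _)
    _ ≤ lowEnv n φ d z := by
        refine le_trans (le_of_eq ?_) (le_iSup _ (fun _ : Fin n => j))
        simp [hjz]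

lemma lowEnv_ne_top (n φ d)
    (hmono : ∀ x y : Fin n → ℝ, (∀ i, x i ≤ y i) → φ x ≤ φ y) (z) :
    lowEnv n φ d z ≠ ⊤ :=
  ne_top_of_le_ne_top ENNReal.ofReal_ne_top (lowEnv_le n φ d hmono z)

lemma env_ae_eq (n : ℕ) (κ : Fin n → Measure ℝ) (hκ : ∀ k, IsProbabilityMeasure (κ k))
    (d : ℕ → ℝ) (hat : ∀ k (t : ℝ), κ k {t} ≠ 0 → t ∈ Set.range d)
    (hd : ∀ a b : ℝ, a < b → ∃ j, a < d j ∧ d j < b)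
    (φ : (Fin n → ℝ) → ℝ) (hmono : ∀ x y : Fin n → ℝ, (∀ i, x i ≤ y i) → φ x ≤ φ y) :
    Measure.pi κ {z | lowEnv n φ d z ≠ upEnv n φ d z} = 0 := by
  set Sq : ℚ × ℚ → Set (Fin n → ℝ) := fun qq =>
    {z | 0 ≤ (qq.1 : ℝ) ∧ (qq.1 : ℝ) < (qq.2 : ℝ) ∧
      lowEnv n φ d z ≤ ENNReal.ofReal (qq.1 : ℝ) ∧
      ENNReal.ofReal (qq.2 : ℝ) ≤ upEnv n φ d z} with hSq
  have hcover : {z | lowEnv n φ d z ≠ upEnv n φ d z} ⊆ ⋃ qq : ℚ × ℚ, Sq qq := by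
    intro z hz
    have hlu : lowEnv n φ d z < upEnv n φ d z :=
      lt_of_le_of_ne (le_trans (lowEnv_le n φ d hmono z) (le_upEnv n φ d hmono z)) hz
    obtain ⟨q1, hq10, hq1l, hq1u⟩ := ENNReal.lt_iff_exists_rat_btwn.1 hlu
    obtain ⟨q2, hq20, hq2l, hq2u⟩ := ENNReal.lt_iff_exists_rat_btwn.1 hq1u
    refine Set.mem_iUnion.2 ⟨(q1, q2), ?_⟩
    have hofreal1 : (Real.toNNReal (q1:ℝ) : ℝ≥0∞) = ENNReal.ofReal (q1:ℝ) := rfl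
    have hofreal2 : (Real.toNNReal (q2:ℝ) : ℝ≥0∞) = ENNReal.ofReal (q2:ℝ) := rfl
    have hqq : (q1 : ℝ) < (q2 : ℝ) := by
      have := hq2l
      rw [hofreal1, hofreal2] at this
      have h2 := (ENNReal.ofReal_lt_ofReal_iff_of_nonneg (by exact_mod_cast hq10)).1 this
      exact h2
    exact ⟨by exact_mod_cast hq10, hqq, by rw [← hofreal1]; exact le_of_lt hq1l,
      by rw [← hofreal2]; exact le_of_lt hq2u⟩
  refine measure_mono_null hcover (measure_iUnion_null ?_)
  intro qq
  by_cases hcond : 0 ≤ (qq.1 : ℝ) ∧ (qq.1 : ℝ) < (qq.2 : ℝ)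
  · refine claimZ n κ hκ d hat hd (Sq qq) ?_ ?_
    · apply MeasurableSet.inter (MeasurableSet.const _)
      apply MeasurableSet.inter (MeasurableSet.const _)
      refine MeasurableSet.inter ?_ ?_
      · exact (measurable_lowEnv n φ d) measurableSet_Iic
      · exact (measurable_upEnv n φ d) measurableSet_Ici
    · rintro c ⟨⟨z1, hz1, h1⟩, ⟨z2, hz2, h2⟩⟩
      have hlow : ENNReal.ofReal (φ (fun k => d (c k))) ≤ ENNReal.ofReal (qq.1 : ℝ) := by
        refine le_trans ?_ hz1.2.2.1
        refine le_trans (le_of_eq ?_) (le_iSup _ c)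
        simp [h1]
      have hup : ENNReal.ofReal (qq.2 : ℝ) ≤ ENNReal.ofReal (φ (fun k => d (c k))) := by
        refine le_trans hz2.2.2.2 ?_
        refine le_trans (iInf_le _ c) (le_of_eq ?_)
        simp [h2]
      have : ENNReal.ofReal (qq.2 : ℝ) ≤ ENNReal.ofReal (qq.1 : ℝ) := le_trans hup hlow
      rw [ENNReal.ofReal_le_ofReal_iff hcond.1] at this
      linarith [hcond.2]
  · have : Sq qq = ∅ := by
      ext z
      simp only [hSq, Set.mem_setOf_eq, Set.mem_empty_iff_false, iff_false]
      rintro ⟨h1, h2, -⟩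
      exact hcond ⟨h1, h2⟩
    simp [this]



lemma measurable_nat_max {α : Type*} [MeasurableSpace α] {f g : α → ℕ}
    (hf : Measurable f) (hg : Measurable g) :
    Measurable fun a => max (f a) (g a) := by
  apply measurable_to_countable'
  intro y
  have hset : (fun a => max (f a) (g a)) ⁻¹' {y} =
      (f ⁻¹' {y} ∩ g ⁻¹' (Set.Iic y)) ∪ (g ⁻¹' {y} ∩ f ⁻¹' (Set.Iic y)) := by
    ext a
    simp only [Set.mem_preimage, Set.mem_singleton_iff, Set.mem_union, Set.mem_inter_iff,
      Set.mem_Iic]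
    omega
  rw [hset]
  exact ((hf (measurableSet_singleton y)).inter
      (hg ((Set.to_countable _).measurableSet))).union
    ((hg (measurableSet_singleton y)).inter (hf ((Set.to_countable _).measurableSet)))

lemma measurable_finset_sup_nat {α : Type*} [MeasurableSpace α] (s : Finset ℕ)
    (f : ℕ → α → ℕ) (hf : ∀ k, Measurable (f k)) :
    Measurable fun a => s.sup fun k => f k a := by
  induction s using Finset.induction_on with
  | empty => simpa using measurable_const
  | insert k s' hk ih =>
    have heq : (fun a => (insert k s').sup fun k' => f k' a)
        = fun a => max (f k a) (s'.sup fun k' => f k' a) := by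
      funext a
      rw [Finset.sup_insert]
    rw [heq]
    exact measurable_nat_max (hf k) ih

lemma sup_filter_eq (s : Finset ℕ) (p : ℕ → Prop) [DecidablePred p] :
    (s.filter p).sup id = s.sup fun k => if p k then k else 0 := by
  apply le_antisymm
  · apply Finset.sup_le
    intro k hk
    rw [Finset.mem_filter] at hk
    have := Finset.le_sup (f := fun k => if p k then k else 0) hk.1
    simpa [hk.2] using this
  · apply Finset.sup_le
    intro k hk
    split_ifs with h
    · exact Finset.le_sup (f := id) (Finset.mem_filter.2 ⟨hk, h⟩)
    · exact Nat.zero_le _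

lemma measurable_count {α : Type*} [MeasurableSpace α] (m : ℕ) (v : α → Fin m → ℝ) (c : α → ℝ)
    (hv : ∀ j, Measurable fun a => v a j) (hc : Measurable c) :
    Measurable fun a => ((Finset.univ.filter (fun j : Fin m => v a j ≤ c a)).card : ℕ) := by
  have heq : (fun a => (Finset.univ.filter (fun j : Fin m => v a j ≤ c a)).card)
      = fun a => ∑ j : Fin m, if v a j ≤ c a then 1 else 0 := by
    funext a
    rw [Finset.card_filter]
  rw [heq]
  apply Finset.measurable_sum
  intro j _
  exact Measurable.ite (measurableSet_le (hv j) hc) measurable_const measurable_const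

lemma measurable_stepUp {α : Type*} [MeasurableSpace α] (m : ℕ) (γ : α → ℕ → ℝ)
    (x : α → Fin m → ℝ) (hγ : ∀ k, Measurable fun a => γ a k)
    (hx : ∀ j, Measurable fun a => x a j) :
    Measurable fun a => stepUpRejections m (γ a) (x a) := by
  have heq : (fun a => stepUpRejections m (γ a) (x a))
      = fun a => (Finset.range (m+1)).sup fun k =>
          if k ≤ ((Finset.univ.filter (fun j : Fin m => x a j ≤ γ a k)).card : ℕ)
          then k else 0 := by
    funext a
    exact sup_filter_eq _ _
  rw [heq]
  apply measurable_finset_sup_nat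
  intro k
  have hcard : Measurable fun a =>
      ((Finset.univ.filter (fun j : Fin m => x a j ≤ γ a k)).card : ℕ) :=
    measurable_count m x (fun a => γ a k) hx (hγ k)
  have hset : MeasurableSet {a : α |
      k ≤ ((Finset.univ.filter (fun j : Fin m => x a j ≤ γ a k)).card : ℕ)} :=
    hcard ((Set.to_countable _).measurableSet)
  exact Measurable.ite hset measurable_const measurable_const




lemma stepUp_mono (m : ℕ) (γ γ' : ℕ → ℝ) (x x' : Fin m → ℝ)
    (hx : ∀ j, x' j ≤ x j) (hγ : ∀ k, γ k ≤ γ' k) :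
    stepUpRejections m γ x ≤ stepUpRejections m γ' x' := by
  apply Finset.sup_mono
  intro k hk
  simp only [Finset.mem_filter] at hk ⊢
  refine ⟨hk.1, le_trans hk.2 (Finset.card_le_card ?_)⟩
  intro j hj
  simp only [Finset.mem_filter, Finset.mem_univ, true_and] at hj ⊢
  exact le_trans (hx j) (le_trans hj (hγ k))

section Det

variable (n : ℕ) (q : ℝ) (φ : (Fin (n+1) → ℝ) → ℝ) (d : ℕ → ℝ)

noncomputable def psiR (z : Fin (n+1) → ℝ) : ℝ := (lowEnv (n+1) φ d z).toReal

noncomputable def RtFun (i : Fin (n+1)) (x : ℝ) (y : Fin n → ℝ) : ℕ :=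
  stepUpRejections (n+1) (fun k => k * q / psiR n φ d (i.insertNth x y)) (i.insertNth x y)

def EtProp (i : Fin (n+1)) (x : ℝ) (y : Fin n → ℝ) : Prop :=
  x ≤ (RtFun n q φ d i x y) * q / psiR n φ d (i.insertNth x y)

noncomputable def Ustar (i : Fin (n+1)) (y : Fin n → ℝ) : ℝ≥0∞ :=
  ⨆ s : ℚ, if (0 ≤ (s:ℝ) ∧ (s:ℝ) ≤ 1 ∧ EtProp n q φ d i s y)
    then ENNReal.ofReal (s:ℝ) else 0

noncomputable def Xfun (i : Fin (n+1)) (y : Fin n → ℝ) : ℝ≥0∞ :=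
  lowEnv (n+1) φ d (i.insertNth 0 y)

noncomputable def Bfun (i : Fin (n+1)) (y : Fin n → ℝ) : ℝ≥0∞ :=
  min 1 (ENNReal.ofReal q * (Ustar n q φ d i y * Xfun n φ d i y)⁻¹)

variable {n q φ d}
variable (hq0 : 0 < q)
  (hmono : ∀ x y : Fin (n+1) → ℝ, (∀ i, x i ≤ y i) → φ x ≤ φ y)
  (hpos : ∀ x, 0 < φ x)
  (hd : ∀ a b : ℝ, a < b → ∃ j, a < d j ∧ d j < b)

lemma insertNth_le_insertNth (i : Fin (n+1)) {x x' : ℝ} (y : Fin n → ℝ) (h : x ≤ x') :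
    ∀ j, (i.insertNth x y : Fin (n+1) → ℝ) j ≤ (i.insertNth x' y : Fin (n+1) → ℝ) j := by
  intro j
  by_cases hj : j = i
  · subst hj; simp [Fin.insertNth_apply_same, h]
  · obtain ⟨k, rfl⟩ := Fin.exists_succAbove_eq hj
    simp [Fin.insertNth_apply_succAbove]

include hmono hpos hd in
lemma psiR_mono {z z' : Fin (n+1) → ℝ} (h : ∀ j, z j ≤ z' j) :
    psiR n φ d z ≤ psiR n φ d z' := by
  unfold psiR
  exact (ENNReal.toReal_le_toReal (lowEnv_ne_top _ _ d hmono _)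
    (lowEnv_ne_top _ _ d hmono _)).2 (lowEnv_mono _ _ d h)

include hmono hpos hd in
lemma psiR_pos (z) : 0 < psiR n φ d z :=
  ENNReal.toReal_pos (lowEnv_pos _ _ _ hd hpos z).ne' (lowEnv_ne_top _ _ _ hmono z)

include hq0 hmono hpos hd in
lemma Rt_antitone (i : Fin (n+1)) {x x' : ℝ} (y : Fin n → ℝ) (h : x ≤ x') :
    RtFun n q φ d i x' y ≤ RtFun n q φ d i x y := by
  apply stepUp_mono
  · exact insertNth_le_insertNth i y h
  · intro k
    apply div_le_div_of_nonneg_left _ (psiR_pos hmono hpos hd _) _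
    · positivity
    · exact psiR_mono hmono hpos hd (insertNth_le_insertNth i y h)

include hq0 hmono hpos hd in
lemma Et_down (i : Fin (n+1)) {x x' : ℝ} (y : Fin n → ℝ) (h : x ≤ x')
    (hEt : EtProp n q φ d i x' y) : EtProp n q φ d i x y := by
  unfold EtProp at hEt ⊢
  refine le_trans h (le_trans hEt ?_)
  apply div_le_div₀
  · positivity
  · exact mul_le_mul_of_nonneg_right
      (Nat.cast_le.2 (Rt_antitone hq0 hmono hpos hd i y h)) hq0.le
  · exact psiR_pos hmono hpos hd _
  · exact psiR_mono hmono hpos hd (insertNth_le_insertNth i y h)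

include hq0 hmono hpos hd in
lemma Et_mul_le (i : Fin (n+1)) {x : ℝ} (y : Fin n → ℝ) (hEt : EtProp n q φ d i x y) :
    x * psiR n φ d (i.insertNth x y) ≤ (RtFun n q φ d i x y) * q := by
  unfold EtProp at hEt
  exact (le_div_iff₀ (psiR_pos hmono hpos hd _)).1 hEt

include hq0 hmono hpos hd in
lemma key_real_bound (i : Fin (n+1)) {x : ℝ} (y : Fin n → ℝ)
    (hx0 : 0 ≤ x) (hEt : EtProp n q φ d i x y)
    {s : ℝ} (hs0 : 0 ≤ s) (hEts : EtProp n q φ d i s y) :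
    s * psiR n φ d (i.insertNth 0 y) ≤ q * (max (RtFun n q φ d i x y) 1 : ℕ) := by
  have hψ0 : 0 < psiR n φ d (i.insertNth 0 y) := psiR_pos hmono hpos hd _
  rcases le_total s x with hsx | hxs
  · have h1 : x * psiR n φ d (i.insertNth x y) ≤ (RtFun n q φ d i x y) * q :=
      Et_mul_le hq0 hmono hpos hd i y hEt
    have h2 : s * psiR n φ d (i.insertNth 0 y) ≤ x * psiR n φ d (i.insertNth x y) := by
      apply mul_le_mul hsx (psiR_mono hmono hpos hd (insertNth_le_insertNth i y hx0)) hψ0.le hx0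
    refine le_trans h2 (le_trans h1 ?_)
    rw [mul_comm]
    apply mul_le_mul_of_nonneg_left _ hq0.le
    exact_mod_cast Nat.cast_le.2 (le_max_left _ 1)
  · have h1 : s * psiR n φ d (i.insertNth s y) ≤ (RtFun n q φ d i s y) * q :=
      Et_mul_le hq0 hmono hpos hd i y hEts
    have h2 : s * psiR n φ d (i.insertNth 0 y) ≤ s * psiR n φ d (i.insertNth s y) :=
      mul_le_mul_of_nonneg_left
        (psiR_mono hmono hpos hd (insertNth_le_insertNth i y hs0)) hs0
    refine le_trans h2 (le_trans h1 ?_)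
    rw [mul_comm]
    apply mul_le_mul_of_nonneg_left _ hq0.le
    have : RtFun n q φ d i s y ≤ RtFun n q φ d i x y :=
      Rt_antitone hq0 hmono hpos hd i y hxs
    exact_mod_cast Nat.cast_le.2 (le_trans this (le_max_left _ 1))

include hmono in
lemma Xfun_eq_ofReal (i : Fin (n+1)) (y : Fin n → ℝ) :
    Xfun n φ d i y = ENNReal.ofReal (psiR n φ d (i.insertNth 0 y)) := by
  unfold Xfun psiR
  rw [ENNReal.ofReal_toReal (lowEnv_ne_top _ _ _ hmono _)]

lemma Ustar_le_one (i : Fin (n+1)) (y : Fin n → ℝ) : Ustar n q φ d i y ≤ 1 := by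
  apply iSup_le
  intro s
  split_ifs with h
  · calc ENNReal.ofReal (s:ℝ) ≤ ENNReal.ofReal 1 := ENNReal.ofReal_le_ofReal h.2.1
      _ = 1 := ENNReal.ofReal_one
  · exact zero_le

include hq0 hmono hpos hd in
lemma Ustar_mul_X_le (i : Fin (n+1)) {x : ℝ} (y : Fin n → ℝ)
    (hx0 : 0 ≤ x) (hEt : EtProp n q φ d i x y) :
    Ustar n q φ d i y * Xfun n φ d i y ≤
      ENNReal.ofReal q * (max (RtFun n q φ d i x y) 1 : ℕ) := by
  rw [Xfun_eq_ofReal hmono i y]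
  unfold Ustar
  rw [ENNReal.iSup_mul]
  apply iSup_le
  intro s
  split_ifs with h
  · rw [← ENNReal.ofReal_mul h.1]
    calc ENNReal.ofReal ((s:ℝ) * psiR n φ d (i.insertNth 0 y))
        ≤ ENNReal.ofReal (q * (max (RtFun n q φ d i x y) 1 : ℕ)) :=
          ENNReal.ofReal_le_ofReal
            (key_real_bound hq0 hmono hpos hd i y hx0 hEt h.1 h.2.2)
      _ = ENNReal.ofReal q * ENNReal.ofReal ((max (RtFun n q φ d i x y) 1 : ℕ) : ℝ) :=
          ENNReal.ofReal_mul hq0.le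
      _ = ENNReal.ofReal q * (max (RtFun n q φ d i x y) 1 : ℕ) := by
          rw [ENNReal.ofReal_natCast]
  · simp

include hq0 hmono hpos hd in
lemma ofReal_le_Ustar (i : Fin (n+1)) {x : ℝ} (y : Fin n → ℝ)
    (hx0 : 0 ≤ x) (hx1 : x ≤ 1) (hEt : EtProp n q φ d i x y) :
    ENNReal.ofReal x ≤ Ustar n q φ d i y := by
  by_contra hcon
  push_neg at hcon
  have hUne : Ustar n q φ d i y ≠ ⊤ :=
    ne_top_of_le_ne_top ENNReal.one_ne_top (Ustar_le_one i y)
  have htr : (Ustar n q φ d i y).toReal < x :=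
    (ENNReal.lt_ofReal_iff_toReal_lt hUne).1 hcon
  obtain ⟨s, hs1, hs2⟩ := exists_rat_btwn htr
  have hs0 : 0 ≤ (s:ℝ) := le_trans ENNReal.toReal_nonneg hs1.le
  have hEts : EtProp n q φ d i s y := Et_down hq0 hmono hpos hd i y hs2.le hEt
  have hterm : ENNReal.ofReal (s:ℝ) ≤ Ustar n q φ d i y := by
    refine le_trans (le_of_eq ?_) (le_iSup _ s)
    rw [if_pos ⟨hs0, le_trans hs2.le hx1, hEts⟩]
  have : Ustar n q φ d i y < ENNReal.ofReal (s:ℝ) :=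
    (ENNReal.lt_ofReal_iff_toReal_lt hUne).2 hs1
  exact absurd hterm (not_le.2 this)

include hq0 hmono hpos hd in
lemma Ustar_mul_B_le (i : Fin (n+1)) (y : Fin n → ℝ) :
    Ustar n q φ d i y * Bfun n q φ d i y ≤
      ENNReal.ofReal q * (Xfun n φ d i y)⁻¹ := by
  have hUne : Ustar n q φ d i y ≠ ⊤ :=
    ne_top_of_le_ne_top ENNReal.one_ne_top (Ustar_le_one i y)
  have hXne : Xfun n φ d i y ≠ ⊤ := by
    rw [Xfun_eq_ofReal hmono i y]; exact ENNReal.ofReal_ne_top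
  set U := Ustar n q φ d i y
  set X := Xfun n φ d i y
  calc U * Bfun n q φ d i y ≤ U * (ENNReal.ofReal q * (U * X)⁻¹) :=
        mul_le_mul_right (min_le_right _ _) U
    _ = ENNReal.ofReal q * (U * (U⁻¹ * X⁻¹)) := by
        rw [ENNReal.mul_inv (Or.inr hXne) (Or.inl hUne)]
        ring
    _ = ENNReal.ofReal q * ((U * U⁻¹) * X⁻¹) := by ring
    _ ≤ ENNReal.ofReal q * (1 * X⁻¹) := by
        apply mul_le_mul_right
        exact mul_le_mul_left (ENNReal.mul_inv_le_one U) X⁻¹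
    _ = ENNReal.ofReal q * X⁻¹ := by rw [one_mul]

include hq0 hmono hpos hd in
lemma invMax_le_B (i : Fin (n+1)) {x : ℝ} (y : Fin n → ℝ)
    (hx0 : 0 ≤ x) (hEt : EtProp n q φ d i x y) :
    ((max (RtFun n q φ d i x y) 1 : ℕ) : ℝ≥0∞)⁻¹ ≤ Bfun n q φ d i y := by
  set Me : ℝ≥0∞ := ((max (RtFun n q φ d i x y) 1 : ℕ) : ℝ≥0∞) with hMe
  have hMe1 : 1 ≤ Me := by
    rw [hMe]
    exact_mod_cast Nat.one_le_cast.2 (le_max_right _ 1)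
  have hMene0 : Me ≠ 0 := by
    intro h; rw [h] at hMe1; exact absurd hMe1 (by simp)
  have hMenetop : Me ≠ ⊤ := by rw [hMe]; exact ENNReal.natCast_ne_top _
  have hqne0 : ENNReal.ofReal q ≠ 0 := by
    simp [ENNReal.ofReal_eq_zero, not_le, hq0]
  have hqnetop : ENNReal.ofReal q ≠ ⊤ := ENNReal.ofReal_ne_top
  refine le_min ?_ ?_
  · exact ENNReal.inv_le_one.2 hMe1
  · have h := Ustar_mul_X_le hq0 hmono hpos hd i y hx0 hEt
    rw [← hMe] at h
    have h2 : (ENNReal.ofReal q * Me)⁻¹ ≤ (Ustar n q φ d i y * Xfun n φ d i y)⁻¹ :=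
      ENNReal.inv_le_inv' h
    have h3 : (ENNReal.ofReal q * Me)⁻¹ = (ENNReal.ofReal q)⁻¹ * Me⁻¹ :=
      ENNReal.mul_inv (Or.inl hqne0) (Or.inl hqnetop)
    calc Me⁻¹ = (ENNReal.ofReal q * (ENNReal.ofReal q)⁻¹) * Me⁻¹ := by
          rw [ENNReal.mul_inv_cancel hqne0 hqnetop, one_mul]
      _ = ENNReal.ofReal q * ((ENNReal.ofReal q)⁻¹ * Me⁻¹) := by ring
      _ = ENNReal.ofReal q * (ENNReal.ofReal q * Me)⁻¹ := by rw [h3]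
      _ ≤ ENNReal.ofReal q * (Ustar n q φ d i y * Xfun n φ d i y)⁻¹ :=
          mul_le_mul_right h2 _

include hd in
lemma lowEnv_drop_le_X (φn : (Fin n → ℝ) → ℝ)
    (hdropφ : ∀ (z : Fin (n+1) → ℝ) (i : Fin (n+1)), φn (z ∘ i.succAbove) ≤ φ z)
    (i : Fin (n+1)) (y : Fin n → ℝ) :
    lowEnv n φn d y ≤ Xfun n φ d i y := by
  obtain ⟨j0, hj01, hj02⟩ := hd (-1) 0 (by norm_num)
  apply iSup_le
  intro c'
  split_ifs with hcond
  · set c : Fin (n+1) → ℕ := i.insertNth j0 c' with hc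
    have hdc : (fun j => d (c j)) ∘ i.succAbove = fun k => d (c' k) := by
      funext k
      simp [hc, Fin.insertNth_apply_succAbove]
    have hterm : ENNReal.ofReal (φn (fun k => d (c' k)))
        ≤ ENNReal.ofReal (φ (fun j => d (c j))) := by
      apply ENNReal.ofReal_le_ofReal
      have h := hdropφ (fun j => d (c j)) i
      rwa [hdc] at h
    refine le_trans hterm ?_
    have hcond2 : ∀ j, d (c j) ≤ (i.insertNth 0 y : Fin (n+1) → ℝ) j := by
      intro j
      by_cases hj : j = i
      · subst hj
        simp only [hc, Fin.insertNth_apply_same]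
        exact hj02.le
      · obtain ⟨k, rfl⟩ := Fin.exists_succAbove_eq hj
        simp only [hc, Fin.insertNth_apply_succAbove]
        exact hcond k
    unfold Xfun lowEnv
    refine le_trans (le_of_eq ?_) (le_iSup _ c)
    rw [if_pos hcond2]
  · exact zero_le

lemma measurable_insertNth_fun (i : Fin (n+1)) (x : ℝ) :
    Measurable fun y : Fin n → ℝ => (i.insertNth x y : Fin (n+1) → ℝ) := by
  apply measurable_pi_lambda
  intro j
  by_cases hj : j = i
  · subst hj
    simp only [Fin.insertNth_apply_same]
    exact measurable_const
  · obtain ⟨k, rfl⟩ := Fin.exists_succAbove_eq hj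
    simp only [Fin.insertNth_apply_succAbove]
    exact measurable_pi_apply k

lemma measurable_psiR_comp (i : Fin (n+1)) (x : ℝ) :
    Measurable fun y : Fin n → ℝ => psiR n φ d (i.insertNth x y) :=
  ((measurable_lowEnv (n+1) φ d).comp (measurable_insertNth_fun i x)).ennreal_toReal

lemma measurable_Rt (i : Fin (n+1)) (x : ℝ) :
    Measurable fun y : Fin n → ℝ => RtFun n q φ d i x y := by
  unfold RtFun
  apply measurable_stepUp
  · intro k
    exact measurable_const.div (measurable_psiR_comp i x)
  · intro j
    exact (measurable_pi_apply j).comp (measurable_insertNth_fun i x)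

lemma measurable_Et (i : Fin (n+1)) (s : ℝ) :
    MeasurableSet {y : Fin n → ℝ | EtProp n q φ d i s y} := by
  unfold EtProp
  apply measurableSet_le measurable_const
  apply Measurable.div
  · exact (measurable_from_nat.comp (measurable_Rt i s)).mul measurable_const
  · exact measurable_psiR_comp i s

lemma measurable_Ustar (i : Fin (n+1)) : Measurable (Ustar n q φ d i) := by
  apply Measurable.iSup
  intro s
  refine Measurable.ite ?_ measurable_const measurable_const
  rw [Set.setOf_and, Set.setOf_and]
  exact (MeasurableSet.const _).inter ((MeasurableSet.const _).inter (measurable_Et i s))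

lemma measurable_Xfun (i : Fin (n+1)) : Measurable (Xfun n φ d i) :=
  (measurable_lowEnv (n+1) φ d).comp (measurable_insertNth_fun i 0)

lemma measurable_Bfun (i : Fin (n+1)) : Measurable (Bfun n q φ d i) := by
  apply Measurable.min measurable_const
  exact measurable_const.mul ((measurable_Ustar i).mul (measurable_Xfun i)).inv

lemma measurable_gfun (i : Fin (n+1)) :
    Measurable (fun w : ℝ × (Fin n → ℝ) =>
      if ENNReal.ofReal w.1 ≤ Ustar n q φ d i w.2 then Bfun n q φ d i w.2 else 0) := by
  refine Measurable.ite ?_ ((measurable_Bfun i).comp measurable_snd) measurable_const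
  exact measurableSet_le (measurable_fst.ennreal_ofReal)
    ((measurable_Ustar i).comp measurable_snd)

end Det

/-- Adaptive FDR bound: for a positive monotonic estimator `m̂₀` (non-decreasing
in each p-value, and removing a p-value does not increase the estimate), the
modified step-up BH procedure with thresholds `γ_i = i*q/m̂₀(p)` applied to `m`
independent p-values whose first `m₀` are i.i.d. `U[0,1]` satisfies
`FDR = E[V/max(R,1)] ≤ m₀ * q * E[1/m̂₀⁽¹⁾]`, where `m̂₀⁽¹⁾ = m̂₀(p₂,...,p_m)`. -/
theorem adaptive_fdr_bound {Ω : Type*} [MeasurableSpace Ω]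
    (μ : Measure Ω) [IsProbabilityMeasure μ] (m m₀ : ℕ) (hm : m₀ ≤ m) (hm1 : 1 ≤ m)
    (q : ℝ) (hq0 : 0 < q) (hq1 : q ≤ 1)
    (mhat : ∀ n : ℕ, (Fin n → ℝ) → ℝ)
    (hpos : ∀ n x, 0 < mhat n x)
    (hmono : ∀ n (x y : Fin n → ℝ), (∀ i, x i ≤ y i) → mhat n x ≤ mhat n y)
    (hdrop : ∀ n (x : Fin (n + 1) → ℝ) (i : Fin (n + 1)),
      mhat n (x ∘ i.succAbove) ≤ mhat (n + 1) x)
    (p : Fin m → Ω → ℝ) (hmeas : ∀ i, Measurable (p i))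
    (hindep : iIndepFun p μ)
    (hrange : ∀ i ω, p i ω ∈ Set.Icc (0:ℝ) 1)
    (hnull : ∀ i : Fin m, (i : ℕ) < m₀ →
      Measure.map (p i) μ = volume.restrict (Set.Icc (0:ℝ) 1))
    (mh : Ω → ℝ) (hmh : ∀ ω, mh ω = mhat m (fun i => p i ω))
    -- the estimator disregarding the first p-value
    (mh1 : Ω → ℝ) (hmh1 : ∀ ω, mh1 ω = mhat (m - 1)
      (fun j : Fin (m - 1) => p ⟨(j : ℕ) + 1, by omega⟩ ω))
    (R : Ω → ℕ) (hR : ∀ ω,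
      R ω = stepUpRejections m (fun k => k * q / mh ω) (fun i => p i ω))
    (V : Ω → ℕ) (hV : ∀ ω, V ω = (Finset.univ.filter
      (fun i : Fin m => (i : ℕ) < m₀ ∧ p i ω ≤ (R ω) * q / mh ω)).card) :
    ∫⁻ ω, ENNReal.ofReal ((V ω : ℝ) / max (R ω) 1) ∂μ ≤
      (m₀ : ℝ≥0∞) * ENNReal.ofReal q * ∫⁻ ω, ENNReal.ofReal (1 / mh1 ω) ∂μ := by
  classical
  obtain ⟨n, rfl⟩ : ∃ n, m = n + 1 := ⟨m - 1, by omega⟩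
  -- marginal laws
  set marg : Fin (n+1) → Measure ℝ := fun j => Measure.map (p j) μ with hmarg
  have hprob : ∀ j, IsProbabilityMeasure (marg j) := fun j =>
    Measure.isProbabilityMeasure_map (hmeas j).aemeasurable
  haveI : ∀ j, IsProbabilityMeasure (marg j) := hprob
  haveI : ∀ j, SigmaFinite (marg j) := fun j => inferInstance
  set P : Ω → (Fin (n+1) → ℝ) := fun ω j => p j ω with hP
  have hPmeas : Measurable P := measurable_pi_lambda _ (fun j => hmeas j)
  set ν : Measure (Fin (n+1) → ℝ) := Measure.pi marg with hν
  -- the joint law is the product measure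
  have hlaw : Measure.map P μ = ν := by
    rw [hν]
    symm
    apply Measure.pi_eq
    intro s hs
    rw [Measure.map_apply hPmeas (MeasurableSet.univ_pi hs)]
    have hpre : P ⁻¹' (Set.univ.pi s) = ⋂ j, p j ⁻¹' s j := by
      ext ω
      simp [hP, Set.mem_univ_pi]
    rw [hpre]
    have hip := (ProbabilityTheory.iIndepFun_iff_measure_inter_preimage_eq_mul.1 hindep)
      Finset.univ (fun j _ => hs j)
    have hbi : (⋂ j, p j ⁻¹' s j) = ⋂ j ∈ Finset.univ, p j ⁻¹' s j := by
      simp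
    rw [hbi, hip]
    exact Finset.prod_congr rfl fun j _ => (Measure.map_apply (hmeas j) (hs j)).symm
  -- the countable dense grid set
  set A : Set ℝ := Set.range ((↑) : ℚ → ℝ) ∪ ⋃ j, {t : ℝ | marg j {t} ≠ 0} with hA
  have hAcnt : A.Countable := by
    apply Set.Countable.union (Set.countable_range _)
    apply Set.countable_iUnion
    intro j
    have hc := Measure.countable_meas_level_set_pos (μ := marg j)
      (g := fun t : ℝ => t) measurable_id
    refine hc.mono ?_
    intro t ht
    simp only [Set.mem_setOf_eq] at ht ⊢
    have hst : {a : ℝ | a = t} = {t} := by ext; simp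
    rw [hst]
    exact pos_iff_ne_zero.2 ht
  have hAne : A.Nonempty := ⟨((0:ℚ):ℝ), Or.inl ⟨0, rfl⟩⟩
  obtain ⟨d, hdrange⟩ := Set.Countable.exists_eq_range hAcnt hAne
  have hatoms : ∀ (j : Fin (n+1)) (t : ℝ), marg j {t} ≠ 0 → t ∈ Set.range d := by
    intro j t ht
    rw [← hdrange, hA]
    exact Or.inr (Set.mem_iUnion.2 ⟨j, ht⟩)
  have hdense : ∀ a b : ℝ, a < b → ∃ j, a < d j ∧ d j < b := by
    intro a b hab
    obtain ⟨s, hs1, hs2⟩ := exists_rat_btwn hab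
    have hmem : (s:ℝ) ∈ Set.range d := by
      rw [← hdrange, hA]
      exact Or.inl ⟨s, rfl⟩
    obtain ⟨j, hj⟩ := hmem
    exact ⟨j, by rw [hj]; exact hs1, by rw [hj]; exact hs2⟩
  set φ : (Fin (n+1) → ℝ) → ℝ := mhat (n+1) with hφ
  set φn : (Fin n → ℝ) → ℝ := mhat n with hφn
  have hφmono := hmono (n+1)
  have hφpos := hpos (n+1)
  -- the bad set where the envelopes disagree
  set Bad : Set (Fin (n+1) → ℝ) := {z | lowEnv (n+1) φ d z ≠ upEnv (n+1) φ d z} with hBad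
  have hBadMeas : MeasurableSet Bad := by
    have : Bad = {z | lowEnv (n+1) φ d z = upEnv (n+1) φ d z}ᶜ := by
      ext z; simp [hBad]
    rw [this]
    have heqset : {z | lowEnv (n+1) φ d z = upEnv (n+1) φ d z}
        = {z | lowEnv (n+1) φ d z ≤ upEnv (n+1) φ d z}
          ∩ {z | upEnv (n+1) φ d z ≤ lowEnv (n+1) φ d z} := by
      ext z
      simp only [Set.mem_setOf_eq, Set.mem_inter_iff]
      constructor
      · intro h; exact ⟨le_of_eq h, le_of_eq h.symm⟩
      · intro h; exact le_antisymm h.1 h.2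
    rw [heqset]
    exact ((measurableSet_le (measurable_lowEnv (n+1) φ d) (measurable_upEnv (n+1) φ d)).inter
      (measurableSet_le (measurable_upEnv (n+1) φ d) (measurable_lowEnv (n+1) φ d))).compl
  have hBadNull : ν Bad = 0 := by
    rw [hν]
    exact env_ae_eq (n+1) marg hprob d hatoms hdense φ hφmono
  have hPBad : μ (P ⁻¹' Bad) = 0 := by
    rw [← hlaw] at hBadNull
    rwa [Measure.map_apply hPmeas hBadMeas] at hBadNull
  have hgood : ∀ᵐ ω ∂μ, P ω ∉ Bad := by
    have h := measure_eq_zero_iff_ae_notMem.mp hPBad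
    filter_upwards [h] with ω hω
    intro hmem
    exact hω hmem
  -- on good points, the measurable version agrees with mh
  have hψeq : ∀ ω, P ω ∉ Bad → psiR n φ d (P ω) = mh ω := by
    intro ω hω
    have heq : lowEnv (n+1) φ d (P ω) = upEnv (n+1) φ d (P ω) := by
      by_contra hne
      exact hω hne
    have h1 : lowEnv (n+1) φ d (P ω) = ENNReal.ofReal (φ (P ω)) := by
      apply le_antisymm (lowEnv_le _ φ d hφmono _)
      rw [heq]
      exact le_upEnv _ φ d hφmono _
    unfold psiR
    rw [h1, ENNReal.toReal_ofReal (hφpos _).le, hmh ω]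
  set F : Finset (Fin (n+1)) := Finset.univ.filter (fun i => (i:ℕ) < m₀) with hF
  have hFcard : F.card = m₀ := by
    have himg : F = Finset.image (Fin.castLE hm) Finset.univ := by
      ext x
      rw [hF, Finset.mem_filter, Finset.mem_image]
      constructor
      · rintro ⟨-, hx⟩
        exact ⟨⟨(x:ℕ), hx⟩, Finset.mem_univ _, by ext; rfl⟩
      · rintro ⟨a, -, rfl⟩
        exact ⟨Finset.mem_univ _, a.2⟩
    rw [himg, Finset.card_image_of_injective _ (Fin.castLE_injective hm),
      Finset.card_univ, Fintype.card_fin]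
  set Yf : Fin (n+1) → Ω → (Fin n → ℝ) := fun i ω k => p (i.succAbove k) ω with hYf
  set gf : Fin (n+1) → ℝ × (Fin n → ℝ) → ℝ≥0∞ := fun i w =>
    if ENNReal.ofReal w.1 ≤ Ustar n q φ d i w.2 then Bfun n q φ d i w.2 else 0 with hgf
  set Hf : Fin (n+1) → Ω → ℝ≥0∞ := fun i ω => gf i (p i ω, Yf i ω) with hHf
  have hgfmeas : ∀ i, Measurable (gf i) := fun i => measurable_gfun i
  have hYfmeas : ∀ i, Measurable (Yf i) := fun i =>
    measurable_pi_lambda _ (fun k => hmeas _)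
  have hHfmeas : ∀ i, Measurable (Hf i) := fun i =>
    (hgfmeas i).comp ((hmeas i).prodMk (hYfmeas i))
  -- pointwise bound
  have hptwise : ∀ᵐ ω ∂μ, ENNReal.ofReal ((V ω : ℝ) / max (R ω) 1) ≤ ∑ i ∈ F, Hf i ω := by
    filter_upwards [hgood] with ω hω
    have hVsum : (V ω : ℝ) = ∑ i ∈ F, (if p i ω ≤ (R ω) * q / mh ω then (1:ℝ) else 0) := by
      rw [hV ω]
      have hfe : Finset.univ.filter
          (fun i : Fin (n+1) => (i:ℕ) < m₀ ∧ p i ω ≤ (R ω) * q / mh ω)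
          = F.filter (fun i => p i ω ≤ (R ω) * q / mh ω) := by
        rw [hF, Finset.filter_filter]
      rw [hfe, Finset.card_filter]
      push_cast
      rfl
    have hdiv : (V ω : ℝ) / ((max (R ω) 1 : ℕ) : ℝ)
        = ∑ i ∈ F, (if p i ω ≤ (R ω) * q / mh ω then (1:ℝ) else 0)
            / ((max (R ω) 1 : ℕ) : ℝ) := by
      rw [hVsum, Finset.sum_div]
    rw [hdiv, ENNReal.ofReal_sum_of_nonneg (fun i _ => by positivity)]
    apply Finset.sum_le_sum
    intro i hi
    by_cases hc : p i ω ≤ (R ω) * q / mh ω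
    · have hvec : (i.insertNth (p i ω) (Yf i ω) : Fin (n+1) → ℝ) = P ω := by
        funext j
        by_cases hj : j = i
        · subst hj
          simp [Fin.insertNth_apply_same, hP]
        · obtain ⟨k, rfl⟩ := Fin.exists_succAbove_eq hj
          simp [Fin.insertNth_apply_succAbove, hYf, hP]
      have hψ := hψeq ω hω
      have hRt : RtFun n q φ d i (p i ω) (Yf i ω) = R ω := by
        unfold RtFun
        rw [hvec, hψ, hR ω]
      have hEt : EtProp n q φ d i (p i ω) (Yf i ω) := by
        unfold EtProp
        rw [hvec, hψ, hRt]
        exact hc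
      have hx01 := hrange i ω
      have hUyes : ENNReal.ofReal (p i ω) ≤ Ustar n q φ d i (Yf i ω) :=
        ofReal_le_Ustar hq0 hφmono hφpos hdense i (Yf i ω) hx01.1 hx01.2 hEt
      have hB := invMax_le_B hq0 hφmono hφpos hdense i (Yf i ω) hx01.1 hEt
      rw [hRt] at hB
      have hHval : Hf i ω = Bfun n q φ d i (Yf i ω) := by
        simp only [hHf, hgf]
        rw [if_pos hUyes]
      rw [if_pos hc, hHval]
      refine le_trans (le_of_eq ?_) hB
      have hpos' : (0:ℝ) < ((max (R ω) 1 : ℕ) : ℝ) := by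
        exact_mod_cast Nat.lt_of_lt_of_le Nat.one_pos (le_max_right (R ω) 1)
      rw [one_div, ENNReal.ofReal_inv_of_pos hpos', ENNReal.ofReal_natCast]
    · rw [if_neg hc]
      simp
  -- the product-measure decomposition at coordinate i, and the per-term bound
  set ν' : Measure (Fin n → ℝ) := Measure.pi (fun k => marg k.succ) with hν'
  haveI : ∀ k : Fin n, IsProbabilityMeasure ((fun k : Fin n => marg k.succ) k) :=
    fun k => hprob _
  set I : ℝ≥0∞ := ∫⁻ y, (upEnv n φn d y)⁻¹ ∂ν' with hI
  have hperi : ∀ i ∈ F, ∫⁻ ω, Hf i ω ∂μ ≤ ENNReal.ofReal q * I := by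
    intro i hi
    have him0 : (i:ℕ) < m₀ := by
      rw [hF] at hi
      simpa using hi
    set e : (Fin (n+1) → ℝ) ≃ᵐ ℝ × (Fin n → ℝ) :=
      MeasurableEquiv.piFinSuccAbove (fun _ : Fin (n+1) => ℝ) i with he
    have hcomp : ∀ ω, e (P ω) = (p i ω, Yf i ω) := fun ω => rfl
    have hprodeq : (marg i).prod (Measure.pi (fun k => marg (i.succAbove k)))
        = (volume.restrict (Set.Icc (0:ℝ) 1)).prod ν' := by
      have h1 : marg i = volume.restrict (Set.Icc (0:ℝ) 1) := hnull i him0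
      have h2 : (fun k => marg (i.succAbove k)) = (fun k : Fin n => marg k.succ) := by
        funext k
        by_cases hlt : (k.castSucc : Fin (n+1)) < i
        · rw [Fin.succAbove_of_castSucc_lt _ _ hlt]
          have hltn : ((k.castSucc : Fin (n+1)) : ℕ) < (i:ℕ) := Fin.lt_def.mp hlt
          rw [Fin.coe_castSucc] at hltn
          have ha : ((k.castSucc : Fin (n+1)) : ℕ) < m₀ := by
            rw [Fin.coe_castSucc]
            omega
          have hb : ((k.succ : Fin (n+1)) : ℕ) < m₀ := by
            rw [Fin.val_succ]
            omega
          rw [hmarg]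
          simp only
          rw [hnull _ ha, hnull _ hb]
        · rw [Fin.succAbove_of_le_castSucc _ _ (le_of_not_gt hlt)]
      rw [h1, h2, hν']
    calc ∫⁻ ω, Hf i ω ∂μ = ∫⁻ ω, gf i (e (P ω)) ∂μ := by
          apply lintegral_congr
          intro ω
          rw [hcomp ω]
      _ = ∫⁻ w, gf i w ∂(Measure.map (fun ω => e (P ω)) μ) :=
          (lintegral_map (hgfmeas i) (e.measurable.comp hPmeas)).symm
      _ = ∫⁻ w, gf i w ∂((volume.restrict (Set.Icc (0:ℝ) 1)).prod ν') := by
          rw [show (fun ω => e (P ω)) = (⇑e ∘ P) from rfl,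
            ← Measure.map_map e.measurable hPmeas, hlaw, hν,
            (measurePreserving_piFinSuccAbove marg i).map_eq, hprodeq]
      _ = ∫⁻ y, ∫⁻ x, gf i (x, y) ∂(volume.restrict (Set.Icc (0:ℝ) 1)) ∂ν' :=
          lintegral_prod_symm _ (hgfmeas i).aemeasurable
      _ = ∫⁻ y, Ustar n q φ d i y * Bfun n q φ d i y ∂ν' := by
          apply lintegral_congr
          intro y
          have hU1 : Ustar n q φ d i y ≤ 1 := Ustar_le_one i y
          have hUne : Ustar n q φ d i y ≠ ⊤ :=
            ne_top_of_le_ne_top ENNReal.one_ne_top hU1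
          have hu1 : (Ustar n q φ d i y).toReal ≤ 1 := by
            have := (ENNReal.toReal_le_toReal hUne ENNReal.one_ne_top).2 hU1
            simpa using this
          have hseteq : {x : ℝ | ENNReal.ofReal x ≤ Ustar n q φ d i y}
              = Set.Iic (Ustar n q φ d i y).toReal := by
            ext x
            simp only [Set.mem_setOf_eq, Set.mem_Iic]
            rw [ENNReal.ofReal_le_iff_le_toReal hUne]
          have hifeq : (fun x : ℝ => gf i (x, y))
              = Set.indicator (Set.Iic (Ustar n q φ d i y).toReal)
                  (fun _ => Bfun n q φ d i y) := by
            funext x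
            simp only [hgf]
            by_cases h : ENNReal.ofReal x ≤ Ustar n q φ d i y
            · rw [if_pos h, Set.indicator_of_mem]
              rw [← hseteq]
              exact h
            · rw [if_neg h, Set.indicator_of_notMem]
              rw [← hseteq]
              exact h
          rw [hifeq, lintegral_indicator_const measurableSet_Iic]
          have hmeasval : (volume.restrict (Set.Icc (0:ℝ) 1))
              (Set.Iic (Ustar n q φ d i y).toReal) = Ustar n q φ d i y := by
            rw [Measure.restrict_apply measurableSet_Iic]
            have hii : Set.Iic (Ustar n q φ d i y).toReal ∩ Set.Icc (0:ℝ) 1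
                = Set.Icc 0 (Ustar n q φ d i y).toReal := by
              ext x
              simp only [Set.mem_inter_iff, Set.mem_Iic, Set.mem_Icc]
              constructor
              · rintro ⟨h1, h2, h3⟩
                exact ⟨h2, h1⟩
              · rintro ⟨h1, h2⟩
                exact ⟨h2, h1, le_trans h2 hu1⟩
            rw [hii, Real.volume_Icc, sub_zero, ENNReal.ofReal_toReal hUne]
          rw [hmeasval, mul_comm]
      _ ≤ ∫⁻ y, ENNReal.ofReal q * (lowEnv n φn d y)⁻¹ ∂ν' := by
          apply lintegral_mono
          intro y
          refine le_trans (Ustar_mul_B_le hq0 hφmono hφpos hdense i y) ?_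
          apply mul_le_mul_right
          apply ENNReal.inv_le_inv'
          exact lowEnv_drop_le_X hdense φn (fun z j => hdrop n z j) i y
      _ = ∫⁻ y, ENNReal.ofReal q * (upEnv n φn d y)⁻¹ ∂ν' := by
          apply lintegral_congr_ae
          have hnull' : ν' {y | lowEnv n φn d y ≠ upEnv n φn d y} = 0 := by
            rw [hν']
            exact env_ae_eq n (fun k => marg k.succ) (fun k => hprob _) d
              (fun k t ht => hatoms _ t ht) hdense φn (hmono n)
          have hae : ∀ᵐ y ∂ν', lowEnv n φn d y = upEnv n φn d y := by
            have h := measure_eq_zero_iff_ae_notMem.mp hnull'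
            filter_upwards [h] with y hy
            by_contra hne
            exact hy hne
          filter_upwards [hae] with y hy
          rw [hy]
      _ = ENNReal.ofReal q * I := by
          rw [hI]
          exact lintegral_const_mul _ ((measurable_upEnv n φn d).inv)
  -- relating I to the right-hand side
  set Z : Ω → (Fin n → ℝ) := fun ω k => p k.succ ω with hZ
  have hZmeas : Measurable Z := measurable_pi_lambda _ (fun k => hmeas _)
  have hlawZ : Measure.map Z μ = ν' := by
    set e0 : (Fin (n+1) → ℝ) ≃ᵐ ℝ × (Fin n → ℝ) :=
      MeasurableEquiv.piFinSuccAbove (fun _ : Fin (n+1) => ℝ) 0 with he0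
    have hcomp0 : Z = Prod.snd ∘ (⇑e0 ∘ P) := by
      funext ω
      funext k
      simp only [hZ, Function.comp_apply]
      have : (0 : Fin (n+1)).succAbove k = k.succ := by
        rw [Fin.succAbove_zero]
      rw [show (Prod.snd (e0 (P ω)) : Fin n → ℝ) k = P ω ((0 : Fin (n+1)).succAbove k) from rfl,
        this]
    rw [hcomp0, ← Measure.map_map measurable_snd (e0.measurable.comp hPmeas),
      ← Measure.map_map e0.measurable hPmeas, hlaw, hν,
      (measurePreserving_piFinSuccAbove marg 0).map_eq, Measure.map_snd_prod]
    have hfam : (fun k : Fin n => marg ((0 : Fin (n+1)).succAbove k))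
        = (fun k : Fin n => marg k.succ) := by
      funext k
      rw [Fin.succAbove_zero]
    rw [measure_univ, one_smul, hν', hfam]
  have hRHS : I ≤ ∫⁻ ω, ENNReal.ofReal (1 / mh1 ω) ∂μ := by
    have h1 : I = ∫⁻ ω, (upEnv n φn d (Z ω))⁻¹ ∂μ := by
      rw [hI, ← hlawZ, lintegral_map (f := fun y => (upEnv n φn d y)⁻¹) ((measurable_upEnv n φn d).inv) hZmeas]
    rw [h1]
    apply lintegral_mono
    intro ω
    show (upEnv n φn d (Z ω))⁻¹ ≤ ENNReal.ofReal (1 / mh1 ω)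
    have hmh1' : mh1 ω = φn (Z ω) := by
      rw [hmh1 ω]
      rfl
    rw [hmh1', one_div, ENNReal.ofReal_inv_of_pos (hpos n _)]
    exact ENNReal.inv_le_inv' (le_upEnv n φn d (hmono n) _)
  calc ∫⁻ ω, ENNReal.ofReal ((V ω : ℝ) / max (R ω) 1) ∂μ
      ≤ ∫⁻ ω, ∑ i ∈ F, Hf i ω ∂μ := lintegral_mono_ae hptwise
    _ = ∑ i ∈ F, ∫⁻ ω, Hf i ω ∂μ := lintegral_finset_sum F (fun i _ => hHfmeas i)
    _ ≤ ∑ _i ∈ F, ENNReal.ofReal q * I := Finset.sum_le_sum hperi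
    _ = (m₀ : ℝ≥0∞) * (ENNReal.ofReal q * I) := by
        rw [Finset.sum_const, hFcard, nsmul_eq_mul]
    _ ≤ (m₀ : ℝ≥0∞) * (ENNReal.ofReal q * ∫⁻ ω, ENNReal.ofReal (1 / mh1 ω) ∂μ) := by
        exact mul_le_mul_right (mul_le_mul_right hRHS _) _
    _ = (m₀ : ℝ≥0∞) * ENNReal.ofReal q * ∫⁻ ω, ENNReal.ofReal (1 / mh1 ω) ∂μ := by
        rw [mul_assoc]
end

section
/- There exist FDR procedures violating monotonicity of the FDR: with m=3 hypotheses, one null p-value p_1 ~ U[0,1], and two alternatives p_2, p_3 i.i.d. with law εU[0,ε] + (1-ε)δ_ε (stochastically smaller than uniform), let P^{(1)} reject only the smallest p-value and P^{(2)} reject the two smallest. Then FDR^{(1)} = Pr(p_1 < min(p_2,p_3)) = ε + O(ε²) and FDR^{(2)} = (1 - Pr(p_1 > max(p_2,p_3)))/2 = ε/2 + O(ε³), so for sufficiently small ε > 0, FDR^{(1)} > FDR^{(2)}. -/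
open MeasureTheory ProbabilityTheory

open scoped ENNReal

/-- The alternative law `ε·U[0,ε] + (1-ε)·δ_ε`: mass `ε` spread uniformly on
`[0,ε]` (i.e. Lebesgue measure restricted to `[0,ε]`) plus an atom of mass
`1-ε` at `ε`. -/
noncomputable def altLaw (ε : ℝ) : Measure ℝ :=
  volume.restrict (Set.Icc 0 ε) + ENNReal.ofReal (1 - ε) • Measure.dirac ε

lemma altLaw_Ioi {ε x : ℝ} (hε1 : ε ≤ 1) (hx : 0 ≤ x) :
    altLaw ε (Set.Ioi x) = if x < ε then ENNReal.ofReal (1 - x) else 0 := by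
  have h1 : Set.Ioi x ∩ Set.Icc 0 ε = Set.Ioc x ε := by
    ext y
    simp only [Set.mem_inter_iff, Set.mem_Ioi, Set.mem_Icc, Set.mem_Ioc]
    constructor
    · rintro ⟨h1, _, h3⟩; exact ⟨h1, h3⟩
    · rintro ⟨h1, h2⟩; exact ⟨h1, le_trans hx h1.le, h2⟩
  simp only [altLaw, Measure.add_apply, Measure.smul_apply,
    Measure.restrict_apply measurableSet_Ioi, h1, Real.volume_Ioc, smul_eq_mul,
    Measure.dirac_apply' _ measurableSet_Ioi]
  by_cases h : x < ε
  · rw [if_pos h, Set.indicator_of_mem (show ε ∈ Set.Ioi x from h) (1 : ℝ → ℝ≥0∞)]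
    rw [Pi.one_apply, mul_one, ← ENNReal.ofReal_add (by linarith) (by linarith)]
    ring_nf
  · push_neg at h
    rw [if_neg (not_lt.mpr h),
      Set.indicator_of_notMem (show ε ∉ Set.Ioi x by simpa using h) (1 : ℝ → ℝ≥0∞)]
    simp [ENNReal.ofReal_eq_zero.mpr (by linarith : ε - x ≤ 0)]

lemma altLaw_Iio {ε x : ℝ} (hε0 : 0 ≤ ε) (hε1 : ε ≤ 1) (hx : 0 ≤ x) :
    altLaw ε (Set.Iio x) = if x ≤ ε then ENNReal.ofReal x else 1 := by
  by_cases h : x ≤ ε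
  · have h1 : Set.Iio x ∩ Set.Icc 0 ε = Set.Ico 0 x := by
      ext y
      simp only [Set.mem_inter_iff, Set.mem_Iio, Set.mem_Icc, Set.mem_Ico]
      constructor
      · rintro ⟨h1, h2, _⟩; exact ⟨h2, h1⟩
      · rintro ⟨h1, h2⟩; exact ⟨h2, h1, le_trans h2.le h⟩
    rw [if_pos h]
    simp only [altLaw, Measure.add_apply, Measure.smul_apply,
      Measure.restrict_apply measurableSet_Iio, h1, Real.volume_Ico, smul_eq_mul,
      Measure.dirac_apply' _ measurableSet_Iio,
      Set.indicator_of_notMem (show ε ∉ Set.Iio x by simpa using h) (1 : ℝ → ℝ≥0∞)]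
    simp
  · push_neg at h
    have h1 : Set.Iio x ∩ Set.Icc 0 ε = Set.Icc 0 ε := by
      apply Set.inter_eq_right.mpr
      intro y hy
      exact lt_of_le_of_lt (Set.mem_Icc.mp hy).2 h
    rw [if_neg (not_le.mpr h)]
    simp only [altLaw, Measure.add_apply, Measure.smul_apply,
      Measure.restrict_apply measurableSet_Iio, h1, Real.volume_Icc, smul_eq_mul,
      Measure.dirac_apply' _ measurableSet_Iio,
      Set.indicator_of_mem (show ε ∈ Set.Iio x from h) (1 : ℝ → ℝ≥0∞)]
    rw [Pi.one_apply, sub_zero, mul_one, ← ENNReal.ofReal_add (by linarith) (by linarith)]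
    norm_num

lemma altLaw_Iic {ε x : ℝ} (hε0 : 0 ≤ ε) (hε1 : ε ≤ 1) (hx : 0 ≤ x) :
    altLaw ε (Set.Iic x) = if x < ε then ENNReal.ofReal x else 1 := by
  by_cases h : x < ε
  · have h1 : Set.Iic x ∩ Set.Icc 0 ε = Set.Icc 0 x := by
      ext y
      simp only [Set.mem_inter_iff, Set.mem_Iic, Set.mem_Icc]
      constructor
      · rintro ⟨h1, h2, _⟩; exact ⟨h2, h1⟩
      · rintro ⟨h1, h2⟩; exact ⟨h2, h1, le_trans h2 h.le⟩
    rw [if_pos h]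
    simp only [altLaw, Measure.add_apply, Measure.smul_apply,
      Measure.restrict_apply measurableSet_Iic, h1, Real.volume_Icc, smul_eq_mul,
      Measure.dirac_apply' _ measurableSet_Iic,
      Set.indicator_of_notMem (show ε ∉ Set.Iic x by simpa using h) (1 : ℝ → ℝ≥0∞)]
    simp
  · push_neg at h
    have h1 : Set.Iic x ∩ Set.Icc 0 ε = Set.Icc 0 ε := by
      apply Set.inter_eq_right.mpr
      intro y hy
      exact le_trans (Set.mem_Icc.mp hy).2 h
    rw [if_neg (not_lt.mpr h)]
    simp only [altLaw, Measure.add_apply, Measure.smul_apply,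
      Measure.restrict_apply measurableSet_Iic, h1, Real.volume_Icc, smul_eq_mul,
      Measure.dirac_apply' _ measurableSet_Iic,
      Set.indicator_of_mem (show ε ∈ Set.Iic x from h) (1 : ℝ → ℝ≥0∞)]
    rw [Pi.one_apply, sub_zero, mul_one, ← ENNReal.ofReal_add (by linarith) (by linarith)]
    norm_num

lemma joint_eval {Ω : Type} [MeasurableSpace Ω] (μ : Measure Ω) [IsProbabilityMeasure μ]
    (p : Fin 3 → Ω → ℝ) (hm : ∀ i, Measurable (p i))
    (hi : iIndepFun p μ) {s : Set (ℝ × ℝ × ℝ)} (hs : MeasurableSet s) :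
    μ ((fun ω => (p 0 ω, p 1 ω, p 2 ω)) ⁻¹' s)
      = ∫⁻ x, ((μ.map (p 1)).prod (μ.map (p 2))) (Prod.mk x ⁻¹' s) ∂(μ.map (p 0)) := by
  haveI : IsProbabilityMeasure (μ.map (p 0)) := Measure.isProbabilityMeasure_map (hm 0).aemeasurable
  haveI : IsProbabilityMeasure (μ.map (p 1)) := Measure.isProbabilityMeasure_map (hm 1).aemeasurable
  haveI : IsProbabilityMeasure (μ.map (p 2)) := Measure.isProbabilityMeasure_map (hm 2).aemeasurable
  have hq : Measurable (fun ω => (p 1 ω, p 2 ω)) := (hm 1).prodMk (hm 2)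
  have h0q : IndepFun (p 0) (fun ω => (p 1 ω, p 2 ω)) μ :=
    (hi.indepFun_prodMk hm 1 2 0 (by decide) (by decide)).symm
  have hmap0q : μ.map (fun ω => (p 0 ω, (p 1 ω, p 2 ω)))
      = (μ.map (p 0)).prod (μ.map (fun ω => (p 1 ω, p 2 ω))) :=
    (indepFun_iff_map_prod_eq_prod_map_map (hm 0).aemeasurable hq.aemeasurable).mp h0q
  have hmap12 : μ.map (fun ω => (p 1 ω, p 2 ω)) = (μ.map (p 1)).prod (μ.map (p 2)) :=
    (indepFun_iff_map_prod_eq_prod_map_map (hm 1).aemeasurable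
      (hm 2).aemeasurable).mp (hi.indepFun (by decide))
  rw [← Measure.map_apply ((hm 0).prodMk hq) hs, hmap0q, hmap12,
    Measure.prod_apply hs]

lemma eval_min {Ω : Type} [MeasurableSpace Ω] (μ : Measure Ω) [IsProbabilityMeasure μ]
    (p : Fin 3 → Ω → ℝ) (hm : ∀ i, Measurable (p i))
    (hi : iIndepFun p μ) :
    μ {ω | p 0 ω < min (p 1 ω) (p 2 ω)}
      = ∫⁻ x, (μ.map (p 1)) (Set.Ioi x) * (μ.map (p 2)) (Set.Ioi x) ∂(μ.map (p 0)) := by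
  have hs : MeasurableSet {z : ℝ × ℝ × ℝ | z.1 < min z.2.1 z.2.2} :=
    measurableSet_lt measurable_fst
      ((measurable_fst.comp measurable_snd).min (measurable_snd.comp measurable_snd))
  have := joint_eval μ p hm hi hs
  rw [show (fun ω => (p 0 ω, p 1 ω, p 2 ω)) ⁻¹' {z : ℝ × ℝ × ℝ | z.1 < min z.2.1 z.2.2}
    = {ω | p 0 ω < min (p 1 ω) (p 2 ω)} from rfl] at this
  rw [this]
  refine lintegral_congr fun x => ?_
  rw [show Prod.mk x ⁻¹' {z : ℝ × ℝ × ℝ | z.1 < min z.2.1 z.2.2}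
      = Set.Ioi x ×ˢ Set.Ioi x by
    ext y; simp [lt_min_iff]]
  exact Measure.prod_prod _ _

lemma eval_max {Ω : Type} [MeasurableSpace Ω] (μ : Measure Ω) [IsProbabilityMeasure μ]
    (p : Fin 3 → Ω → ℝ) (hm : ∀ i, Measurable (p i))
    (hi : iIndepFun p μ) :
    μ {ω | max (p 1 ω) (p 2 ω) < p 0 ω}
      = ∫⁻ x, (μ.map (p 1)) (Set.Iio x) * (μ.map (p 2)) (Set.Iio x) ∂(μ.map (p 0)) := by
  have hs : MeasurableSet {z : ℝ × ℝ × ℝ | max z.2.1 z.2.2 < z.1} :=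
    measurableSet_lt
      ((measurable_fst.comp measurable_snd).max (measurable_snd.comp measurable_snd))
      measurable_fst
  have := joint_eval μ p hm hi hs
  rw [show (fun ω => (p 0 ω, p 1 ω, p 2 ω)) ⁻¹' {z : ℝ × ℝ × ℝ | max z.2.1 z.2.2 < z.1}
    = {ω | max (p 1 ω) (p 2 ω) < p 0 ω} from rfl] at this
  rw [this]
  refine lintegral_congr fun x => ?_
  rw [show Prod.mk x ⁻¹' {z : ℝ × ℝ × ℝ | max z.2.1 z.2.2 < z.1}
      = Set.Iio x ×ˢ Set.Iio x by
    ext y; simp [max_lt_iff]]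
  exact Measure.prod_prod _ _

open intervalIntegral in
lemma intA {ε : ℝ} (hε0 : 0 < ε) (hε1 : ε < 1) :
    ∫⁻ x in Set.Icc (0:ℝ) 1, altLaw ε (Set.Ioi x) * altLaw ε (Set.Ioi x)
      = ENNReal.ofReal (ε - ε^2 + ε^3/3) := by
  have hcong : ∀ x ∈ Set.Icc (0:ℝ) 1, altLaw ε (Set.Ioi x) * altLaw ε (Set.Ioi x)
      = (Set.Ico (0:ℝ) ε).indicator (fun x => ENNReal.ofReal ((1-x)^2)) x := by
    intro x hx
    obtain ⟨hx0, hx1⟩ := Set.mem_Icc.mp hx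
    rw [altLaw_Ioi hε1.le hx0]
    by_cases h : x < ε
    · rw [if_pos h, Set.indicator_of_mem (Set.mem_Ico.mpr ⟨hx0, h⟩),
        ← ENNReal.ofReal_mul (by linarith), sq]
    · rw [if_neg h, Set.indicator_of_notMem (fun hc => h (Set.mem_Ico.mp hc).2), zero_mul]
  rw [setLIntegral_congr_fun measurableSet_Icc hcong,
    lintegral_indicator measurableSet_Ico,
    Measure.restrict_restrict measurableSet_Ico,
    Set.inter_eq_left.mpr (fun x hx => Set.mem_Icc.mpr
      ⟨(Set.mem_Ico.mp hx).1, le_of_lt (lt_of_lt_of_le (Set.mem_Ico.mp hx).2 hε1.le)⟩)]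
  have hint : IntegrableOn (fun x : ℝ => (1-x)^2) (Set.Ico 0 ε) volume :=
    (((continuous_const.sub continuous_id).pow 2).integrableOn_Icc).mono_set
      Set.Ico_subset_Icc_self
  rw [← ofReal_integral_eq_lintegral_ofReal hint (ae_of_all _ fun x => sq_nonneg _)]
  congr 1
  rw [setIntegral_congr_set Ico_ae_eq_Ioc, ← intervalIntegral.integral_of_le hε0.le]
  have : ∀ x : ℝ, (1 - x)^2 = x^2 - 2*x + 1 := fun x => by ring
  simp_rw [this]
  rw [integral_add ((intervalIntegrable_pow 2).sub
      ((intervalIntegrable_id).const_mul 2)) intervalIntegrable_const,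
    integral_sub (intervalIntegrable_pow 2) ((intervalIntegrable_id).const_mul 2),
    integral_pow, intervalIntegral.integral_const_mul, integral_id, intervalIntegral.integral_const]
  norm_num; ring

open intervalIntegral in
lemma intB {ε : ℝ} (hε0 : 0 < ε) (hε1 : ε < 1) :
    ∫⁻ x in Set.Icc (0:ℝ) 1, altLaw ε (Set.Iio x) * altLaw ε (Set.Iio x)
      = ENNReal.ofReal (1 - ε + ε^3/3) := by
  rw [← Set.Icc_union_Ioc_eq_Icc hε0.le hε1.le,
    lintegral_union measurableSet_Ioc
      (Set.disjoint_left.mpr fun x hx hx' => absurd (Set.mem_Icc.mp hx).2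
        (not_le.mpr (Set.mem_Ioc.mp hx').1))]
  have h1 : ∫⁻ x in Set.Icc (0:ℝ) ε, altLaw ε (Set.Iio x) * altLaw ε (Set.Iio x)
      = ENNReal.ofReal (ε^3/3) := by
    have hcong : ∀ x ∈ Set.Icc (0:ℝ) ε, altLaw ε (Set.Iio x) * altLaw ε (Set.Iio x)
        = ENNReal.ofReal (x^2) := by
      intro x hx
      obtain ⟨hx0, hxε⟩ := Set.mem_Icc.mp hx
      rw [altLaw_Iio hε0.le hε1.le hx0, if_pos hxε, ← ENNReal.ofReal_mul hx0, sq]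
    rw [setLIntegral_congr_fun measurableSet_Icc hcong]
    have hint : IntegrableOn (fun x : ℝ => x^2) (Set.Icc 0 ε) volume :=
      (continuous_id.pow 2).integrableOn_Icc
    rw [← ofReal_integral_eq_lintegral_ofReal hint (ae_of_all _ fun x => sq_nonneg _)]
    congr 1
    rw [setIntegral_congr_set Ioc_ae_eq_Icc.symm, ← intervalIntegral.integral_of_le hε0.le,
      integral_pow]
    norm_num
  have h2 : ∫⁻ x in Set.Ioc ε 1, altLaw ε (Set.Iio x) * altLaw ε (Set.Iio x)
      = ENNReal.ofReal (1 - ε) := by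
    have hcong : ∀ x ∈ Set.Ioc ε 1, altLaw ε (Set.Iio x) * altLaw ε (Set.Iio x) = 1 := by
      intro x hx
      obtain ⟨hxε, _⟩ := Set.mem_Ioc.mp hx
      rw [altLaw_Iio hε0.le hε1.le (le_trans hε0.le hxε.le), if_neg (not_le.mpr hxε), one_mul]
    rw [setLIntegral_congr_fun measurableSet_Ioc hcong, setLIntegral_one,
      Real.volume_Ioc]
  rw [h1, h2, ← ENNReal.ofReal_add (by positivity) (by linarith)]
  ring_nf

/-- There exist FDR procedures violating monotonicity of the FDR: with `m = 3`,
one null `p₁ ~ U[0,1]` and two i.i.d. alternatives with law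
`ε·U[0,ε] + (1-ε)·δ_ε` (which is stochastically smaller than `U[0,1]`), letting
`P⁽¹⁾` reject only the smallest p-value and `P⁽²⁾` the two smallest, we have
`FDR⁽¹⁾ = Pr(p₁ < min(p₂,p₃)) = ε + O(ε²)` and
`FDR⁽²⁾ = (1 - Pr(p₁ > max(p₂,p₃)))/2 = ε/2 + O(ε³)`, so that for all
sufficiently small `ε > 0`, `FDR⁽¹⁾ > FDR⁽²⁾`. -/
theorem fdr_violation_example :
    ∃ C > (0:ℝ), ∃ ε₀ > (0:ℝ), ∀ ε : ℝ, 0 < ε → ε < ε₀ →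
      -- the alternative law is stochastically smaller than `U[0,1]`
      (∀ x ∈ Set.Icc (0:ℝ) 1, ENNReal.ofReal x ≤ altLaw ε (Set.Iic x)) ∧
      ∀ (Ω : Type) [MeasurableSpace Ω] (μ : Measure Ω) [IsProbabilityMeasure μ]
        (p : Fin 3 → Ω → ℝ), (∀ i, Measurable (p i)) →
        iIndepFun p μ →
        Measure.map (p 0) μ = volume.restrict (Set.Icc (0:ℝ) 1) →
        Measure.map (p 1) μ = altLaw ε →
        Measure.map (p 2) μ = altLaw ε →
        |(μ {ω | p 0 ω < min (p 1 ω) (p 2 ω)}).toReal - ε| ≤ C * ε ^ 2 ∧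
        |(1 - (μ {ω | max (p 1 ω) (p 2 ω) < p 0 ω}).toReal) / 2 - ε / 2| ≤ C * ε ^ 3 ∧
        (μ {ω | p 0 ω < min (p 1 ω) (p 2 ω)}).toReal >
          (1 - (μ {ω | max (p 1 ω) (p 2 ω) < p 0 ω}).toReal) / 2 := by
  refine ⟨1, one_pos, 1/2, by norm_num, fun ε hε hε2 => ?_⟩
  have hε1 : ε < 1 := by linarith
  constructor
  · intro x hx
    obtain ⟨hx0, hx1⟩ := Set.mem_Icc.mp hx
    rw [altLaw_Iic hε.le hε1.le hx0]
    split_ifs with h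
    · exact le_rfl
    · calc ENNReal.ofReal x ≤ ENNReal.ofReal 1 := ENNReal.ofReal_le_ofReal hx1
        _ = 1 := ENNReal.ofReal_one
  · intro Ω _ μ _ p hm hi h0 hm1 hm2
    have hA : μ {ω | p 0 ω < min (p 1 ω) (p 2 ω)} = ENNReal.ofReal (ε - ε^2 + ε^3/3) := by
      rw [eval_min μ p hm hi, h0, hm1, hm2]
      exact intA hε hε1
    have hB : μ {ω | max (p 1 ω) (p 2 ω) < p 0 ω} = ENNReal.ofReal (1 - ε + ε^3/3) := by
      rw [eval_max μ p hm hi, h0, hm1, hm2]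
      exact intB hε hε1
    have ha : (0:ℝ) ≤ ε - ε^2 + ε^3/3 := by nlinarith
    have hb : (0:ℝ) ≤ 1 - ε + ε^3/3 := by nlinarith
    rw [hA, hB, ENNReal.toReal_ofReal ha, ENNReal.toReal_ofReal hb]
    refine ⟨?_, ?_, ?_⟩
    · rw [abs_le]; constructor <;> nlinarith
    · rw [abs_le]; constructor <;> nlinarith
    · nlinarith [mul_pos hε (mul_pos (sub_pos.mpr hε1) (sub_pos.mpr hε1))]
end

section
/- In the violation example with m=3: for 0 < ε < 1, FDR^{(1)} = Pr(p_1 < min(p_2,p_3)) = ε[ε²/3 + ε(1-ε) + (1-ε)²] and FDR^{(2)} = [1 - (1-ε) - ε³/3]/2 = ε/2 - ε³/6, and FDR^{(1)} > FDR^{(2)} for all sufficiently small ε. -/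
open MeasureTheory ProbabilityTheory

lemma altLaw_prob {ε : ℝ} (hε0 : 0 < ε) (hε1 : ε < 1) :
    IsProbabilityMeasure (altLaw ε) := by
  constructor
  simp only [altLaw, Measure.coe_add, Pi.add_apply, Measure.restrict_apply_univ,
    Measure.smul_apply, Measure.dirac_apply_of_mem (Set.mem_univ ε), smul_eq_mul, mul_one,
    Real.volume_Icc, sub_zero]
  rw [← ENNReal.ofReal_add hε0.le (by linarith)]
  norm_num

lemma altLaw_Ioi_lt {ε t : ℝ} (ht0 : 0 ≤ t) (htε : t < ε) (hε1 : ε < 1) :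
    altLaw ε (Set.Ioi t) = ENNReal.ofReal (1 - t) := by
  have h1 : Set.Ioi t ∩ Set.Icc 0 ε = Set.Ioc t ε := by
    ext x
    simp only [Set.mem_inter_iff, Set.mem_Ioi, Set.mem_Icc, Set.mem_Ioc]
    constructor
    · rintro ⟨h1, _, h3⟩; exact ⟨h1, h3⟩
    · rintro ⟨h1, h2⟩; exact ⟨h1, by linarith, h2⟩
  simp only [altLaw, Measure.coe_add, Pi.add_apply,
    Measure.restrict_apply measurableSet_Ioi, h1, Real.volume_Ioc,
    Measure.smul_apply, Measure.dirac_apply_of_mem (Set.mem_Ioi.mpr htε), smul_eq_mul, mul_one]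
  rw [← ENNReal.ofReal_add (by linarith) (by linarith)]
  ring_nf

lemma altLaw_Ioi_ge {ε t : ℝ} (htε : ε ≤ t) : altLaw ε (Set.Ioi t) = 0 := by
  have h1 : Set.Ioi t ∩ Set.Icc 0 ε = ∅ := by
    ext x
    simp only [Set.mem_inter_iff, Set.mem_Ioi, Set.mem_Icc, Set.mem_empty_iff_false, iff_false]
    rintro ⟨h1, _, h3⟩; linarith
  have h2 : ε ∉ Set.Ioi t := by simp [htε]
  simp [altLaw, Measure.restrict_apply measurableSet_Ioi, h1,
    Measure.dirac_apply' _ measurableSet_Ioi, Set.indicator_of_notMem h2]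

lemma altLaw_Iio_le {ε t : ℝ} (_ht0 : 0 ≤ t) (htε : t ≤ ε) :
    altLaw ε (Set.Iio t) = ENNReal.ofReal t := by
  have h1 : Set.Iio t ∩ Set.Icc 0 ε = Set.Ico 0 t := by
    ext x
    simp only [Set.mem_inter_iff, Set.mem_Iio, Set.mem_Icc, Set.mem_Ico]
    constructor
    · rintro ⟨h1, h2, _⟩; exact ⟨h2, h1⟩
    · rintro ⟨h1, h2⟩; exact ⟨h2, h1, by linarith⟩
  have h2 : ε ∉ Set.Iio t := by simp [htε]
  simp [altLaw, Measure.restrict_apply measurableSet_Iio, h1,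
    Measure.dirac_apply' _ measurableSet_Iio, Set.indicator_of_notMem h2]

lemma altLaw_Iio_gt {ε t : ℝ} (hε0 : 0 < ε) (hε1 : ε < 1) (htε : ε < t) : altLaw ε (Set.Iio t) = 1 := by
  have h1 : Set.Iio t ∩ Set.Icc 0 ε = Set.Icc 0 ε := by
    apply Set.inter_eq_self_of_subset_right
    intro x hx
    simp only [Set.mem_Icc] at hx
    simp only [Set.mem_Iio]; linarith [hx.2]
  simp only [altLaw, Measure.coe_add, Pi.add_apply,
    Measure.restrict_apply measurableSet_Iio, h1, Real.volume_Icc, sub_zero,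
    Measure.smul_apply, Measure.dirac_apply_of_mem (Set.mem_Iio.mpr htε), smul_eq_mul, mul_one]
  rw [← ENNReal.ofReal_add hε0.le (by linarith)]
  norm_num

/-- Violation example with `m = 3`: one null `p₁ ~ U[0,1]` and two i.i.d.
alternatives with law `ε·U[0,ε] + (1-ε)·δ_ε`. The procedure rejecting only the
smallest p-value has `FDR⁽¹⁾ = Pr(p₁ < min(p₂,p₃)) = ε(ε²/3 + ε(1-ε) + (1-ε)²)`,
the procedure rejecting the two smallest has
`FDR⁽²⁾ = (1 - Pr(p₁ > max(p₂,p₃)))/2 = ε/2 - ε³/6`, and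
`FDR⁽¹⁾ > FDR⁽²⁾` for all sufficiently small `ε > 0`. -/
theorem fdr_violation_example_exact {Ω : Type*} [MeasurableSpace Ω]
    (μ : Measure Ω) [IsProbabilityMeasure μ] (ε : ℝ) (hε0 : 0 < ε) (hε1 : ε < 1)
    (p : Fin 3 → Ω → ℝ) (hmeas : ∀ i, Measurable (p i))
    (hindep : iIndepFun p μ)
    (hnull : Measure.map (p 0) μ = volume.restrict (Set.Icc (0:ℝ) 1))
    (halt1 : Measure.map (p 1) μ = altLaw ε)
    (halt2 : Measure.map (p 2) μ = altLaw ε) :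
    (μ {ω | p 0 ω < min (p 1 ω) (p 2 ω)}).toReal
        = ε * (ε ^ 2 / 3 + ε * (1 - ε) + (1 - ε) ^ 2) ∧
    (1 - (μ {ω | max (p 1 ω) (p 2 ω) < p 0 ω}).toReal) / 2 = ε / 2 - ε ^ 3 / 6 ∧
    (∃ ε₀ > (0:ℝ), ∀ δ : ℝ, 0 < δ → δ < ε₀ →
      δ * (δ ^ 2 / 3 + δ * (1 - δ) + (1 - δ) ^ 2) > δ / 2 - δ ^ 3 / 6) := by
  have hνp : IsProbabilityMeasure (altLaw ε) := altLaw_prob hε0 hε1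
  have h12 : IndepFun (p 1) (p 2) μ := hindep.indepFun (by decide)
  have hpair : μ.map (fun ω => (p 1 ω, p 2 ω)) = (altLaw ε).prod (altLaw ε) := by
    rw [(indepFun_iff_map_prod_eq_prod_map_map (hmeas 1).aemeasurable
      (hmeas 2).aemeasurable).mp h12, halt1, halt2]
  have h0 : IndepFun (p 0) (fun ω => (p 1 ω, p 2 ω)) μ :=
    (hindep.indepFun_prodMk hmeas 1 2 0 (by decide) (by decide)).symm
  have hjoint : μ.map (fun ω => (p 0 ω, (p 1 ω, p 2 ω)))
      = (volume.restrict (Set.Icc (0:ℝ) 1)).prod ((altLaw ε).prod (altLaw ε)) := by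
    rw [(indepFun_iff_map_prod_eq_prod_map_map (hmeas 0).aemeasurable
      ((hmeas 1).prodMk (hmeas 2)).aemeasurable).mp h0, hnull, hpair]
  have hT : Measurable (fun ω => (p 0 ω, (p 1 ω, p 2 ω))) :=
    (hmeas 0).prodMk ((hmeas 1).prodMk (hmeas 2))
  refine ⟨?_, ?_, ?_⟩
  · -- first event
    have hS1 : MeasurableSet {z : ℝ × ℝ × ℝ | z.1 < min z.2.1 z.2.2} :=
      measurableSet_lt measurable_fst
        ((measurable_fst.comp measurable_snd).min (measurable_snd.comp measurable_snd))
    have e1 : μ {ω | p 0 ω < min (p 1 ω) (p 2 ω)}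
        = ((volume.restrict (Set.Icc (0:ℝ) 1)).prod ((altLaw ε).prod (altLaw ε)))
          {z : ℝ × ℝ × ℝ | z.1 < min z.2.1 z.2.2} := by
      rw [← hjoint, Measure.map_apply hT hS1]
      rfl
    rw [Measure.prod_apply hS1] at e1
    have hslice : ∀ t : ℝ, (Prod.mk t ⁻¹' {z : ℝ × ℝ × ℝ | z.1 < min z.2.1 z.2.2})
        = Set.Ioi t ×ˢ Set.Ioi t := by
      intro t; ext y
      simp [lt_min_iff]
    simp only [hslice, Measure.prod_prod] at e1
    have hsplit : Set.Ico (0:ℝ) ε ∪ Set.Icc ε 1 = Set.Icc 0 1 :=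
      Set.Ico_union_Icc_eq_Icc hε0.le hε1.le
    have hdisj : Disjoint (Set.Ico (0:ℝ) ε) (Set.Icc ε 1) := by
      apply Set.disjoint_left.mpr
      rintro x ⟨_, h2⟩ ⟨h3, _⟩; linarith
    rw [show (volume.restrict (Set.Icc (0:ℝ) 1)) = volume.restrict (Set.Ico 0 ε ∪ Set.Icc ε 1)
        by rw [hsplit]] at e1
    rw [lintegral_union measurableSet_Icc hdisj] at e1
    have eA : ∫⁻ t in Set.Ico (0:ℝ) ε, altLaw ε (Set.Ioi t) * altLaw ε (Set.Ioi t)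
        = ENNReal.ofReal (ε ^ 3 / 3 - ε ^ 2 + ε) := by
      rw [setLIntegral_congr_fun measurableSet_Ico (fun t ht => by
        rw [altLaw_Ioi_lt ht.1 ht.2 hε1, ← ENNReal.ofReal_mul (by linarith [ht.2.le])])]
      have hcont : Continuous fun t : ℝ => (1 - t) * (1 - t) := by continuity
      have hint : IntegrableOn (fun t : ℝ => (1 - t) * (1 - t)) (Set.Ico 0 ε) volume :=
        (hcont.integrableOn_Icc.mono_set Set.Ico_subset_Icc_self)
      rw [← ofReal_integral_eq_lintegral_ofReal hint
        (ae_of_all _ fun t => mul_self_nonneg _)]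
      congr 1
      rw [MeasureTheory.integral_Ico_eq_integral_Ioo, ← MeasureTheory.integral_Ioc_eq_integral_Ioo,
        ← intervalIntegral.integral_of_le hε0.le]
      have : ∫ t in (0:ℝ)..ε, (1 - t) * (1 - t) = ∫ t in (0:ℝ)..ε, (t ^ 2 - 2 * t + 1) :=
        intervalIntegral.integral_congr fun t _ => by ring
      rw [this, intervalIntegral.integral_add
          ((intervalIntegral.intervalIntegrable_pow 2).sub
            (show IntervalIntegrable (fun t : ℝ => 2 * t) volume 0 ε from
              (continuous_const.mul continuous_id').intervalIntegrable 0 ε))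
          (intervalIntegrable_const),
        intervalIntegral.integral_sub (intervalIntegral.intervalIntegrable_pow 2)
          (show IntervalIntegrable (fun t : ℝ => 2 * t) volume 0 ε from
              (continuous_const.mul continuous_id').intervalIntegrable 0 ε),
        integral_pow, intervalIntegral.integral_const_mul, integral_id,
        intervalIntegral.integral_const]
      norm_num
      ring
    have eB : ∫⁻ t in Set.Icc ε 1, altLaw ε (Set.Ioi t) * altLaw ε (Set.Ioi t)
        = 0 := by
      rw [setLIntegral_congr_fun measurableSet_Icc
        (fun t ht => by rw [altLaw_Ioi_ge ht.1, zero_mul])]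
      exact lintegral_zero
    rw [eA, eB, add_zero] at e1
    rw [e1, ENNReal.toReal_ofReal (by nlinarith)]
    ring
  · -- second event
    have hS2 : MeasurableSet {z : ℝ × ℝ × ℝ | max z.2.1 z.2.2 < z.1} :=
      measurableSet_lt
        ((measurable_fst.comp measurable_snd).max (measurable_snd.comp measurable_snd))
        measurable_fst
    have e2 : μ {ω | max (p 1 ω) (p 2 ω) < p 0 ω}
        = ((volume.restrict (Set.Icc (0:ℝ) 1)).prod ((altLaw ε).prod (altLaw ε)))
          {z : ℝ × ℝ × ℝ | max z.2.1 z.2.2 < z.1} := by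
      rw [← hjoint, Measure.map_apply hT hS2]
      rfl
    rw [Measure.prod_apply hS2] at e2
    have hslice : ∀ t : ℝ, (Prod.mk t ⁻¹' {z : ℝ × ℝ × ℝ | max z.2.1 z.2.2 < z.1})
        = Set.Iio t ×ˢ Set.Iio t := by
      intro t; ext y
      simp [max_lt_iff]
    simp only [hslice, Measure.prod_prod] at e2
    have hsplit : Set.Icc (0:ℝ) ε ∪ Set.Ioc ε 1 = Set.Icc 0 1 :=
      Set.Icc_union_Ioc_eq_Icc hε0.le hε1.le
    have hdisj : Disjoint (Set.Icc (0:ℝ) ε) (Set.Ioc ε 1) := by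
      apply Set.disjoint_left.mpr
      rintro x ⟨_, h2⟩ ⟨h3, _⟩; linarith
    rw [show (volume.restrict (Set.Icc (0:ℝ) 1)) = volume.restrict (Set.Icc 0 ε ∪ Set.Ioc ε 1)
        by rw [hsplit]] at e2
    rw [lintegral_union measurableSet_Ioc hdisj] at e2
    have eA : ∫⁻ t in Set.Icc (0:ℝ) ε, altLaw ε (Set.Iio t) * altLaw ε (Set.Iio t)
        = ENNReal.ofReal (ε ^ 3 / 3) := by
      rw [setLIntegral_congr_fun measurableSet_Icc (fun t ht => by
        rw [altLaw_Iio_le ht.1 ht.2, ← ENNReal.ofReal_mul ht.1])]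
      have hcont : Continuous fun t : ℝ => t * t := by continuity
      rw [← ofReal_integral_eq_lintegral_ofReal hcont.integrableOn_Icc
        (ae_of_all _ fun t => mul_self_nonneg _)]
      congr 1
      rw [MeasureTheory.integral_Icc_eq_integral_Ioc,
        ← intervalIntegral.integral_of_le hε0.le]
      have : ∫ t in (0:ℝ)..ε, t * t = ∫ t in (0:ℝ)..ε, t ^ 2 :=
        intervalIntegral.integral_congr fun t _ => by ring
      rw [this, integral_pow]
      norm_num
    have eB : ∫⁻ t in Set.Ioc ε 1, altLaw ε (Set.Iio t) * altLaw ε (Set.Iio t)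
        = ENNReal.ofReal (1 - ε) := by
      rw [setLIntegral_congr_fun measurableSet_Ioc
        (fun t ht => by rw [altLaw_Iio_gt hε0 hε1 ht.1, one_mul]),
        setLIntegral_one, Real.volume_Ioc]
    rw [eA, eB, ← ENNReal.ofReal_add (by positivity) (by linarith)] at e2
    rw [e2, ENNReal.toReal_ofReal (by nlinarith [pow_pos hε0 3])]
    ring
  · exact ⟨1, one_pos, fun δ hδ0 hδ1 => by
      nlinarith [mul_pos hδ0 (mul_pos (sub_pos.mpr hδ1) (sub_pos.mpr hδ1))]⟩
end

section
/- Let p_1, ..., p_m be independent p-values with the first m_0 i.i.d. U[0,1]. The step-up BH procedure with constants α_i = iq/m satisfies FDR = E[V/max(R,1)] ≤ (m_0/m) q. -/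
open MeasureTheory ProbabilityTheory Finset
open scoped Classical

lemma stepUp_mem (m : ℕ) (γ : ℕ → ℝ) (x : Fin m → ℝ) :
    stepUpRejections m γ x ∈ ((Finset.range (m + 1)).filter
      (fun k => k ≤ (Finset.univ.filter (fun i : Fin m => x i ≤ γ k)).card)) := by
  have hne : (((Finset.range (m + 1)).filter
      (fun k => k ≤ (Finset.univ.filter (fun i : Fin m => x i ≤ γ k)).card))).Nonempty := by
    exact ⟨0, by simp⟩
  obtain ⟨b, hb, hbe⟩ := Finset.exists_mem_eq_sup _ hne id
  rw [stepUpRejections, hbe]; exact hb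

lemma stepUp_le (m : ℕ) (γ : ℕ → ℝ) (x : Fin m → ℝ) : stepUpRejections m γ x ≤ m := by
  have := stepUp_mem m γ x
  simp only [Finset.mem_filter, Finset.mem_range] at this
  omega

lemma stepUp_congr {m : ℕ} {γ : ℕ → ℝ} (hγ : Monotone γ)
    {x y : Fin m → ℝ} {i : Fin m} {k : ℕ}
    (hx : x i ≤ γ k) (hy : y i ≤ γ k) (hxy : ∀ j, j ≠ i → x j = y j)
    (hk : stepUpRejections m γ x = k) : stepUpRejections m γ y = k := by
  have hcount : ∀ j : ℕ, k ≤ j →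
      (Finset.univ.filter (fun i' : Fin m => x i' ≤ γ j)) =
      (Finset.univ.filter (fun i' : Fin m => y i' ≤ γ j)) := by
    intro j hj
    ext i'
    simp only [Finset.mem_filter, Finset.mem_univ, true_and]
    rcases eq_or_ne i' i with rfl | hne
    · constructor <;> intro _ <;> exact le_trans (by assumption) (hγ hj)
    · rw [hxy i' hne]
  have hmemx := stepUp_mem m γ x
  rw [hk] at hmemx
  simp only [Finset.mem_filter, Finset.mem_range] at hmemx
  apply le_antisymm
  · apply Finset.sup_le
    intro j hj
    simp only [Finset.mem_filter, Finset.mem_range] at hj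
    by_contra hjk
    push_neg at hjk
    simp only [id] at hjk ⊢
    have hkj : k ≤ j := le_of_lt hjk
    have : j ≤ (Finset.univ.filter (fun i' : Fin m => x i' ≤ γ j)).card := by
      rw [hcount j hkj]; exact hj.2
    have hjS : j ≤ stepUpRejections m γ x := by
      apply Finset.le_sup (f := id)
      simp only [Finset.mem_filter, Finset.mem_range]
      exact ⟨hj.1, this⟩
    omega
  · apply Finset.le_sup (f := id)
    simp only [Finset.mem_filter, Finset.mem_range]
    refine ⟨hmemx.1, ?_⟩
    rw [← hcount k le_rfl]; exact hmemx.2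

lemma stepUp_measurable (m : ℕ) (γ : ℕ → ℝ) : Measurable (stepUpRejections m γ) := by
  have h1 : ∀ k, Measurable (fun x : Fin m → ℝ =>
      (Finset.univ.filter (fun i : Fin m => x i ≤ γ k)).card) := by
    intro k
    have : (fun x : Fin m → ℝ => (Finset.univ.filter (fun i : Fin m => x i ≤ γ k)).card)
        = fun x => ∑ i : Fin m, if x i ≤ γ k then 1 else 0 := by
      funext x; rw [Finset.card_filter]
    rw [this]
    apply Finset.measurable_sum
    intro i _
    exact Measurable.ite (measurableSet_le (measurable_pi_apply i) measurable_const)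
      measurable_const measurable_const
  set T : (Fin m → ℝ) → (Fin (m+1) → Fin m → Bool) :=
    fun x k i => decide (x i ≤ γ k) with hT
  have hTmeas : Measurable T := by
    apply measurable_pi_lambda
    intro k
    apply measurable_pi_lambda
    intro i
    apply measurable_to_countable'
    intro b
    rcases b with _ | _
    · have : (fun x : Fin m → ℝ => decide (x i ≤ γ ↑k)) ⁻¹' {false}
          = {x | ¬ (x i ≤ γ ↑k)} := by ext x; simp
      rw [this]
      exact (measurableSet_le (measurable_pi_apply i) measurable_const).compl
    · have : (fun x : Fin m → ℝ => decide (x i ≤ γ ↑k)) ⁻¹' {true}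
          = {x | x i ≤ γ ↑k} := by ext x; simp
      rw [this]
      exact measurableSet_le (measurable_pi_apply i) measurable_const
  set g : (Fin (m+1) → Fin m → Bool) → ℕ := fun b =>
    ((Finset.range (m + 1)).filter
      (fun k => k ≤ (Finset.univ.filter (fun i : Fin m =>
        if h : k < m + 1 then b ⟨k, h⟩ i = true else False)).card)).sup id with hg
  have hcomp : stepUpRejections m γ = g ∘ T := by
    funext x
    simp only [Function.comp, stepUpRejections, hg, hT]
    congr 1
    apply Finset.filter_congr
    intro k hk
    simp only [Finset.mem_range] at hk
    simp [hk]
  rw [hcomp]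
  exact (measurable_of_countable g).comp hTmeas

/-- Benjamini–Hochberg 1995: for independent p-values whose first `m₀` (the
true nulls) are i.i.d. `U[0,1]`, the step-up procedure with constants
`α_i = i*q/m` satisfies `FDR = E[V / max(R,1)] ≤ (m₀/m) * q`. -/
theorem BH95_fdr_control {Ω : Type*} [MeasurableSpace Ω]
    (μ : Measure Ω) [IsProbabilityMeasure μ] (m m₀ : ℕ) (hm : m₀ ≤ m)
    (q : ℝ) (hq0 : 0 < q) (hq1 : q ≤ 1)
    (p : Fin m → Ω → ℝ) (hmeas : ∀ i, Measurable (p i))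
    (hindep : iIndepFun p μ)
    (hnull : ∀ i : Fin m, (i : ℕ) < m₀ →
      Measure.map (p i) μ = volume.restrict (Set.Icc (0:ℝ) 1))
    (R : Ω → ℕ) (hR : ∀ ω, R ω = stepUpRejections m (fun k => k * q / m) (fun i => p i ω))
    (V : Ω → ℕ) (hV : ∀ ω, V ω = (Finset.univ.filter
      (fun i : Fin m => (i : ℕ) < m₀ ∧ p i ω ≤ (R ω) * q / m)).card) :
    ∫ ω, (V ω : ℝ) / max (R ω) 1 ∂μ ≤ ((m₀ : ℝ) / m) * q := by
  -- trivial case m = 0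
  rcases Nat.eq_zero_or_pos m with rfl | hm1
  · interval_cases m₀
    have h0 : ∀ ω, (V ω : ℝ) = 0 := by
      intro ω; rw [hV ω]; simp
    simp only [h0, zero_div, integral_zero]
    simp
  set γ : ℕ → ℝ := fun k => (k : ℝ) * q / m with hγdef
  have hmR : (0:ℝ) < m := by exact_mod_cast hm1
  have hγmono : Monotone γ := by
    intro a b hab
    simp only [hγdef]
    gcongr
  have hγ0 : γ 0 = 0 := by simp [hγdef]
  have hγnonneg : ∀ k, 0 ≤ γ k := fun k => by
    have := hγmono (Nat.zero_le k); rwa [hγ0] at this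
  have hγle1 : ∀ k, k ≤ m → γ k ≤ 1 := by
    intro k hk
    rw [hγdef, div_le_one hmR]
    calc (k:ℝ) * q ≤ m * 1 := by
          apply mul_le_mul (by exact_mod_cast hk) hq1 hq0.le (by positivity)
      _ = m := mul_one _
  -- measurability of R
  have hRmeas : Measurable R := by
    have : R = (stepUpRejections m γ) ∘ (fun ω (i : Fin m) => p i ω) := by
      funext ω; rw [hR ω]; rfl
    rw [this]
    exact (stepUp_measurable m γ).comp (measurable_pi_lambda _ hmeas)
  -- leave-one-out statistic
  set Q : Fin m → Ω → ℕ := fun i ω =>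
    stepUpRejections m γ (fun j => if j = i then γ 1 else p j ω) with hQdef
  have hQmeas : ∀ i, Measurable (Q i) := by
    intro i
    apply (stepUp_measurable m γ).comp
    apply measurable_pi_lambda
    intro j
    by_cases h : j = i
    · simp only [h, if_pos rfl]; exact measurable_const
    · simp only [if_neg h]; exact hmeas j
  -- independence of p i and Q i
  have hQindep : ∀ i, IndepFun (p i) (Q i) μ := by
    intro i
    have hdisj : Disjoint ({i} : Finset (Fin m)) (Finset.univ.erase i) := by simp
    have hbase := hindep.indepFun_finset {i} (Finset.univ.erase i) hdisj hmeas
    set φ : (({i} : Finset (Fin m)) → ℝ) → ℝ :=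
      fun v => v ⟨i, Finset.mem_singleton_self i⟩ with hφdef
    set ψ : ({j : Fin m // j ∈ Finset.univ.erase i} → ℝ) → ℕ := fun v =>
      stepUpRejections m γ
        (fun j => if hj : j ∈ Finset.univ.erase i then v ⟨j, hj⟩ else γ 1) with hψdef
    have hφm : Measurable φ := measurable_pi_apply _
    have hψm : Measurable ψ := by
      apply (stepUp_measurable m γ).comp
      apply measurable_pi_lambda
      intro j
      by_cases h : j ∈ Finset.univ.erase i
      · simp only [dif_pos h]; exact measurable_pi_apply _
      · simp only [dif_neg h]; exact measurable_const
    have hcomp := hbase.comp hφm hψm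
    have h1 : (φ ∘ fun ω (j : ({i} : Finset (Fin m))) => p j ω) = p i := rfl
    have h2 : (ψ ∘ fun ω (j : (Finset.univ.erase i : Finset (Fin m))) => p j ω) = Q i := by
      funext ω
      simp only [Function.comp, hψdef, hQdef]
      congr 1
      funext j
      by_cases h : j = i
      · simp [h]
      · simp [h, Finset.mem_erase]
    rwa [h1, h2] at hcomp
  -- uniform null distribution
  have hPt : ∀ i : Fin m, (i:ℕ) < m₀ → ∀ t : ℝ, 0 ≤ t → t ≤ 1 →
      μ (p i ⁻¹' Set.Iic t) = ENNReal.ofReal t := by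
    intro i hi t ht0 ht1
    rw [← Measure.map_apply (hmeas i) measurableSet_Iic, hnull i hi,
      Measure.restrict_apply measurableSet_Iic]
    have : Set.Iic t ∩ Set.Icc (0:ℝ) 1 = Set.Icc 0 t := by
      ext x
      simp only [Set.mem_inter_iff, Set.mem_Iic, Set.mem_Icc]
      constructor
      · rintro ⟨h1, h2, _⟩; exact ⟨h2, h1⟩
      · rintro ⟨h1, h2⟩; exact ⟨h2, h1, h2.trans ht1⟩
    rw [this, Real.volume_Icc, sub_zero]
  -- the events
  set A : Fin m → ℕ → Set Ω := fun i k => {ω | R ω = k ∧ p i ω ≤ γ k} with hAdef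
  have hAmeas : ∀ i k, MeasurableSet (A i k) := by
    intro i k
    have : A i k = R ⁻¹' {k} ∩ p i ⁻¹' Set.Iic (γ k) := rfl
    rw [this]
    exact (hRmeas (MeasurableSet.singleton k)).inter
      ((hmeas i) measurableSet_Iic)
  -- event identity for k ≥ 1
  have hAeq : ∀ i k, 1 ≤ k → A i k = p i ⁻¹' Set.Iic (γ k) ∩ Q i ⁻¹' {k} := by
    intro i k hk
    have hγ1k : γ 1 ≤ γ k := hγmono hk
    ext ω
    simp only [hAdef, Set.mem_setOf_eq, Set.mem_inter_iff, Set.mem_preimage,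
      Set.mem_Iic, Set.mem_singleton_iff, hQdef]
    constructor
    · rintro ⟨hRk, hp⟩
      refine ⟨hp, ?_⟩
      refine stepUp_congr hγmono (x := fun j => p j ω) hp ?_ ?_ ?_
      · simp only [if_pos rfl]; exact hγ1k
      · intro j hj; simp [hj]
      · rw [← hR ω]; exact hRk
    · rintro ⟨hp, hQk⟩
      refine ⟨?_, hp⟩
      rw [hR ω]
      refine stepUp_congr hγmono (x := fun j => if j = i then γ 1 else p j ω)
        ?_ hp ?_ hQk
      · simp only [if_pos rfl]; exact hγ1k
      · intro j hj; simp [hj]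
  -- abbreviations
  set c : ℕ → ℝ := fun k => (max (k:ℝ) 1)⁻¹ with hcdef
  set Nulls : Finset (Fin m) := Finset.univ.filter (fun i : Fin m => (i:ℕ) < m₀)
    with hNdef
  have hcardN : Nulls.card = m₀ := by
    have : Nulls = Finset.attachFin (Finset.range m₀)
        (fun a ha => lt_of_lt_of_le (Finset.mem_range.mp ha) hm) := by
      ext i; simp [hNdef, Finset.mem_attachFin]
    rw [this, Finset.card_attachFin, Finset.card_range]
  -- pointwise decomposition
  have hpoint : (fun ω => (V ω : ℝ) / max (R ω) 1) = (fun ω =>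
      ∑ i ∈ Nulls, ∑ k ∈ Finset.range (m+1),
        Set.indicator (A i k) (fun _ => c k) ω) := by
    funext ω
    have hRmem : R ω ∈ Finset.range (m+1) := by
      rw [Finset.mem_range, hR ω]; exact Nat.lt_succ_of_le (stepUp_le m γ _)
    have hinner : ∀ i : Fin m, ∑ k ∈ Finset.range (m+1),
        Set.indicator (A i k) (fun _ => c k) ω =
        if p i ω ≤ γ (R ω) then c (R ω) else 0 := by
      intro i
      rw [Finset.sum_eq_single_of_mem (R ω) hRmem]
      · simp only [Set.indicator_apply, hAdef, Set.mem_setOf_eq, true_and]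
      · intro k _ hk
        simp only [Set.indicator_apply, hAdef, Set.mem_setOf_eq]
        rw [if_neg]
        rintro ⟨h1, _⟩
        exact hk (h1.symm)
    simp only [hinner]
    rw [Finset.sum_ite, Finset.sum_const, Finset.sum_const_zero, add_zero,
      Finset.filter_filter]
    have hfilt : (Finset.filter (fun i : Fin m => (i:ℕ) < m₀ ∧ p i ω ≤ γ (R ω))
        Finset.univ).card = V ω := (hV ω).symm
    rw [hfilt, nsmul_eq_mul]
    rw [div_eq_mul_inv]
    congr 1
    rw [hcdef]
    norm_cast
  rw [hpoint]
  have hint : ∀ (i : Fin m) (k : ℕ),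
      Integrable (Set.indicator (A i k) (fun _ => c k)) μ :=
    fun i k => (integrable_const (c k)).indicator (hAmeas i k)
  rw [integral_finset_sum _ (fun i _ => integrable_finset_sum _ (fun k _ => hint i k))]
  have hiint : ∀ i ∈ Nulls, ∫ ω, (∑ k ∈ Finset.range (m+1),
      Set.indicator (A i k) (fun _ => c k) ω) ∂μ =
      ∑ k ∈ Finset.range (m+1), (μ (A i k)).toReal * c k := by
    intro i _
    rw [integral_finset_sum _ (fun k _ => hint i k)]
    refine Finset.sum_congr rfl (fun k _ => ?_)
    rw [integral_indicator_const (c k) (hAmeas i k), smul_eq_mul]; rfl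
  rw [Finset.sum_congr rfl hiint]
  -- the key per-null bound
  have hkey : ∀ i ∈ Nulls,
      ∑ k ∈ Finset.range (m+1), (μ (A i k)).toReal * c k ≤ q / m := by
    intro i hiN
    have hi : (i:ℕ) < m₀ := by
      rw [hNdef, Finset.mem_filter] at hiN; exact hiN.2
    set t : ℕ → ℝ := fun k => (μ (Q i ⁻¹' {k})).toReal with htdef
    have hterm : ∀ k ∈ Finset.range (m+1),
        (μ (A i k)).toReal * c k ≤ (q/m) * (if k = 0 then 0 else t k) := by
      intro k hk
      rw [Finset.mem_range] at hk
      rcases Nat.eq_zero_or_pos k with rfl | hk1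
      · have hA0 : μ (A i 0) = 0 := by
          have hsub : A i 0 ⊆ p i ⁻¹' Set.Iic (γ 0) := fun ω hω => hω.2
          have := measure_mono (μ := μ) hsub
          rw [hPt i hi (γ 0) (hγnonneg 0) (by rw [hγ0]; exact zero_le_one), hγ0,
            ENNReal.ofReal_zero] at this
          exact le_antisymm this zero_le
        simp [hA0]
      · have hkne : k ≠ 0 := Nat.pos_iff_ne_zero.mp hk1
        have hkm : k ≤ m := Nat.lt_succ_iff.mp hk
        have hmul : μ (A i k) = ENNReal.ofReal (γ k) * μ (Q i ⁻¹' {k}) := by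
          rw [hAeq i k hk1,
            (hQindep i).measure_inter_preimage_eq_mul _ _ measurableSet_Iic
              (MeasurableSet.singleton k),
            hPt i hi (γ k) (hγnonneg k) (hγle1 k hkm)]
        have hck : c k = ((k:ℝ))⁻¹ := by
          show ((k:ℝ) ⊔ 1)⁻¹ = ((k:ℝ))⁻¹
          rw [max_eq_left (Nat.one_le_cast.mpr hk1)]
        rw [hmul, ENNReal.toReal_mul, ENNReal.toReal_ofReal (hγnonneg k), hck,
          if_neg hkne]
        have hkR : (k:ℝ) ≠ 0 := by exact_mod_cast hkne
        apply le_of_eq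
        show γ k * (μ (Q i ⁻¹' {k})).toReal * ((k:ℝ))⁻¹
            = q / (m:ℝ) * (μ (Q i ⁻¹' {k})).toReal
        rw [hγdef]
        field_simp
    calc ∑ k ∈ Finset.range (m+1), (μ (A i k)).toReal * c k
        ≤ ∑ k ∈ Finset.range (m+1), (q/m) * (if k = 0 then 0 else t k) :=
          Finset.sum_le_sum hterm
      _ = (q/m) * ∑ k ∈ Finset.range (m+1), (if k = 0 then 0 else t k) := by
          rw [Finset.mul_sum]
      _ ≤ (q/m) * 1 := by
          apply mul_le_mul_of_nonneg_left ?_ (by positivity)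
          rw [Finset.sum_ite, Finset.sum_const_zero, zero_add]
          have hdisj : ((Finset.range (m+1)).filter (fun k => ¬ k = 0) :
              Set ℕ).PairwiseDisjoint (fun k => Q i ⁻¹' {k}) := by
            intro a _ b _ hab
            refine Set.disjoint_left.mpr (fun ω ha hb => hab ?_)
            simp only [Set.mem_preimage, Set.mem_singleton_iff] at ha hb
            rw [← ha, ← hb]
          have hsum : ∑ k ∈ (Finset.range (m+1)).filter (fun k => ¬ k = 0),
              μ (Q i ⁻¹' {k}) ≤ 1 := by
            rw [← measure_biUnion_finset hdisj
              (fun k _ => (hQmeas i) (MeasurableSet.singleton k))]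
            exact prob_le_one
          calc ∑ k ∈ (Finset.range (m+1)).filter (fun k => ¬ k = 0), t k
              = (∑ k ∈ (Finset.range (m+1)).filter (fun k => ¬ k = 0),
                  μ (Q i ⁻¹' {k})).toReal := by
                rw [ENNReal.toReal_sum (fun k _ => measure_ne_top μ _)]
            _ ≤ (1 : ENNReal).toReal := ENNReal.toReal_mono ENNReal.one_ne_top hsum
            _ = 1 := ENNReal.toReal_one
      _ = q / m := mul_one _
  calc ∑ i ∈ Nulls, ∑ k ∈ Finset.range (m+1), (μ (A i k)).toReal * c k
      ≤ ∑ _i ∈ Nulls, q / m := Finset.sum_le_sum hkey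
    _ = (m₀ : ℝ) * (q / m) := by rw [Finset.sum_const, hcardN, nsmul_eq_mul]
    _ = (m₀ : ℝ) / m * q := by ring
end
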